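/- arXiv:2005.12079 — 2 statements merged into one kernel-verified Lean document; each statement's English description precedes it below -/
import Mathlib

section
/- Let ρ be a separable state on ℂ^{d_A} ⊗ ℂ^{d_B}, and let 𝒯 be the (d_A²−1)×(d_B²−1) block of the correlation matrix corresponding to the traceless basis elements (i.e., take A_1 = 𝟙/√(d_A), B_1 = 𝟙/√(d_B), and 𝒯_{ij} = 𝒞_{i+1,j+1}). Then the sum of the singular values of 𝒯 (its trace norm) satisfies Σ_k σ_k(𝒯) ≤ √( (D−1)(d−1)/(Dd) ), where D = max{d_A,d_B}, d = min{d_A,d_B}. -/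
open Matrix Finset
open scoped Kronecker ComplexOrder

noncomputable section

/-- An orthonormal family of Hermitian matrices with respect to the
Hilbert–Schmidt inner product `⟨X,Y⟩ = tr (X * Y)`. -/
def IsHSOrthonormal {n m : ℕ} (A : Fin m → Matrix (Fin n) (Fin n) ℂ) : Prop :=
  (∀ i, (A i).IsHermitian) ∧
  ∀ i j, (A i * A j).trace = if i = j then 1 else 0

/-- A density matrix: positive semidefinite with unit trace. -/
def IsDensityMatrix {n : Type*} [Fintype n] [DecidableEq n] (ρ : Matrix n n ℂ) : Prop :=
  ρ.PosSemidef ∧ ρ.trace = 1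

/-- The correlation matrix `𝒞_{ij} = tr (ρ (A_i ⊗ B_j))` (a real number since the
operators involved are Hermitian). -/
def corrMat {dA dB : ℕ} (ρ : Matrix (Fin dA × Fin dB) (Fin dA × Fin dB) ℂ)
    (A : Fin (dA ^ 2) → Matrix (Fin dA) (Fin dA) ℂ)
    (B : Fin (dB ^ 2) → Matrix (Fin dB) (Fin dB) ℂ) :
    Matrix (Fin (dA ^ 2)) (Fin (dB ^ 2)) ℝ :=
  fun i j => (ρ * (A i ⊗ₖ B j)).trace.re

/-- The rectangular "diagonal" matrix with the entries of `σ` on the diagonal. -/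
def svdDiag (m n r : ℕ) (σ : Fin r → ℝ) : Matrix (Fin m) (Fin n) ℝ :=
  fun i j => if h : (i : ℕ) = (j : ℕ) ∧ (i : ℕ) < r then σ ⟨(i : ℕ), h.2⟩ else 0

/-- `σ` is the decreasingly sorted vector of singular values of `C`. -/
def IsSingularValues {m n r : ℕ} (C : Matrix (Fin m) (Fin n) ℝ) (σ : Fin r → ℝ) : Prop :=
  (∀ k, 0 ≤ σ k) ∧ Antitone σ ∧
  ∃ U : Matrix (Fin m) (Fin m) ℝ, ∃ V : Matrix (Fin n) (Fin n) ℝ,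
    Uᵀ * U = 1 ∧ Vᵀ * V = 1 ∧ C = U * svdDiag m n r σ * Vᵀ

/-- A separable bipartite state. -/
def SeparableState {dA dB : ℕ} (ρ : Matrix (Fin dA × Fin dB) (Fin dA × Fin dB) ℂ) : Prop :=
  ∃ (n : ℕ) (w : Fin n → ℝ) (O : Fin n → Matrix (Fin dA) (Fin dA) ℂ)
    (Q : Fin n → Matrix (Fin dB) (Fin dB) ℂ),
    (∀ k, 0 ≤ w k) ∧ (∑ k, w k = 1) ∧
    (∀ k, IsDensityMatrix (O k)) ∧ (∀ k, IsDensityMatrix (Q k)) ∧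
    ρ = ∑ k, (w k : ℂ) • (O k ⊗ₖ Q k)

/-- Filter Normal Form: all traceless local observables have vanishing expectation. -/
def IsFNF {dA dB : ℕ} (ρ : Matrix (Fin dA × Fin dB) (Fin dA × Fin dB) ℂ) : Prop :=
  (∀ A : Matrix (Fin dA) (Fin dA) ℂ, A.IsHermitian → A.trace = 0 →
    (ρ * (A ⊗ₖ (1 : Matrix (Fin dB) (Fin dB) ℂ))).trace = 0) ∧
  (∀ B : Matrix (Fin dB) (Fin dB) ℂ, B.IsHermitian → B.trace = 0 →
    (ρ * ((1 : Matrix (Fin dA) (Fin dA) ℂ) ⊗ₖ B)).trace = 0)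

/-- The Correlation Minor Norm with parameters `h`, `p`, expressed in terms of the
singular values `σ`. -/
def CMN {r : ℕ} (σ : Fin r → ℝ) (h : ℕ) (p : ℝ) : ℝ :=
  (∑ R ∈ Finset.univ.powersetCard h, ∏ k ∈ R, σ k ^ p) ^ (1 / p)

/-- The Correlation Minor Norm with `p = ∞`: the product of the `h` largest singular
values (the singular values being sorted decreasingly). -/
def CMNinf {r : ℕ} (σ : Fin r → ℝ) (h : ℕ) : ℝ :=
  ∏ k ∈ Finset.univ.filter (fun k : Fin r => (k : ℕ) < h), σ k

/-- The `h`-th elementary symmetric polynomial evaluated at `x`. -/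
def esym {n : ℕ} (h : ℕ) (x : Fin n → ℝ) : ℝ :=
  ∑ R ∈ Finset.univ.powersetCard h, ∏ k ∈ R, x k

/-- An orthonormal family of vectors in `ℂ^n`. -/
def IsONFamily {n r : ℕ} (v : Fin r → (Fin n → ℂ)) : Prop :=
  ∀ k l, star (v k) ⬝ᵥ v l = if k = l then 1 else 0

/-- The rank-one projection `|v⟩⟨v|`. -/
def projOf {n : ℕ} (v : Fin n → ℂ) : Matrix (Fin n) (Fin n) ℂ :=
  Matrix.vecMulVec v (star v)

/-- The post-measurement state `Π[ρ] = Σ_l (|l⟩⟨l| ⊗ 𝟙) ρ (|l⟩⟨l| ⊗ 𝟙)` for the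
projective measurement on Alice's side given by the orthonormal basis `e`. -/
def measured {dA dB : ℕ} (ρ : Matrix (Fin dA × Fin dB) (Fin dA × Fin dB) ℂ)
    (e : Fin dA → (Fin dA → ℂ)) : Matrix (Fin dA × Fin dB) (Fin dA × Fin dB) ℂ :=
  ∑ l, (projOf (e l) ⊗ₖ (1 : Matrix (Fin dB) (Fin dB) ℂ)) * ρ *
       (projOf (e l) ⊗ₖ (1 : Matrix (Fin dB) (Fin dB) ℂ))

/-- A regular, coherent, degree-1 quantum design with `r = 1`: a family of rank-one
orthogonal projections summing to `(v/b)·𝟙` whose pairwise overlaps are constant. -/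
def IsQDesign {b v : ℕ} (P : Fin v → Matrix (Fin b) (Fin b) ℂ) : Prop :=
  (∀ k, (P k).IsHermitian) ∧ (∀ k, P k * P k = P k) ∧ (∀ k, (P k).trace = 1) ∧
  (∑ k, P k) = ((v : ℂ) / (b : ℂ)) • 1 ∧
  ∃ μ : ℝ, ∀ k l, k ≠ l → (P k * P l).trace = (μ : ℂ)

/-- A classical-quantum state `χ = Σ_l q_l |l⟩⟨l| ⊗ ρ_l`. -/
def IsCQState {dA dB : ℕ} (χ : Matrix (Fin dA × Fin dB) (Fin dA × Fin dB) ℂ) : Prop :=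
  ∃ e : Fin dA → (Fin dA → ℂ), IsONFamily e ∧
  ∃ (q : Fin dA → ℝ) (τ : Fin dA → Matrix (Fin dB) (Fin dB) ℂ),
    (∀ l, 0 ≤ q l) ∧ (∑ l, q l = 1) ∧ (∀ l, IsDensityMatrix (τ l)) ∧
    χ = ∑ l, (q l : ℂ) • (projOf (e l) ⊗ₖ τ l)

/-- Squared Frobenius norm. -/
def frobSq {n : Type*} [Fintype n] (M : Matrix n n ℂ) : ℝ :=
  ∑ i, ∑ j, Complex.normSq (M i j)

/-- Geometric quantum discord with respect to Alice's subsystem. -/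
def geoDiscord {dA dB : ℕ} (ρ : Matrix (Fin dA × Fin dB) (Fin dA × Fin dB) ℂ) : ℝ :=
  sInf {x : ℝ | ∃ χ, IsCQState χ ∧ x = frobSq (ρ - χ)}

/-- The set of values `M_{h,p}(Π[ρ])^p` over all projective measurements `Π` on
Alice's subsystem. -/
def measuredCMNSet {dA dB : ℕ} (ρ : Matrix (Fin dA × Fin dB) (Fin dA × Fin dB) ℂ)
    (A : Fin (dA ^ 2) → Matrix (Fin dA) (Fin dA) ℂ)
    (B : Fin (dB ^ 2) → Matrix (Fin dB) (Fin dB) ℂ) (h : ℕ) (p : ℝ) : Set ℝ :=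
  {x | ∃ e : Fin dA → (Fin dA → ℂ), IsONFamily e ∧
    ∃ σ' : Fin (min dA dB ^ 2) → ℝ,
      IsSingularValues (corrMat (measured ρ e) A B) σ' ∧ x = CMN σ' h p ^ p}

/-- The vector `Σ_k s_k |φ_k⟩⊗|ξ_k⟩` of a Schmidt decomposition. -/
def pureVec {dA dB r : ℕ} (s : Fin r → ℝ) (φ : Fin r → (Fin dA → ℂ))
    (ξ : Fin r → (Fin dB → ℂ)) : Fin dA × Fin dB → ℂ :=
  fun i => ∑ k, (s k : ℂ) * φ k i.1 * ξ k i.2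


lemma herm_trace_re {n : ℕ} {O A : Matrix (Fin n) (Fin n) ℂ}
    (hO : O.IsHermitian) (hA : A.IsHermitian) :
    (((O * A).trace.re : ℝ) : ℂ) = (O * A).trace := by
  rw [← Complex.conj_eq_iff_re]
  calc (starRingEnd ℂ) (O * A).trace = star (O * A).trace := rfl
    _ = ((O * A)ᴴ).trace := (Matrix.trace_conjTranspose _).symm
    _ = (Aᴴ * Oᴴ).trace := by rw [conjTranspose_mul]
    _ = (A * O).trace := by rw [hA.eq, hO.eq]
    _ = (O * A).trace := trace_mul_comm _ _

lemma purity_le_one {n : ℕ} {O : Matrix (Fin n) (Fin n) ℂ}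
    (hO : O.PosSemidef) (htr : O.trace = 1) :
    (O * O).trace.re ≤ 1 := by
  have hH : O.IsHermitian := hO.1
  set U : Matrix (Fin n) (Fin n) ℂ := (hH.eigenvectorUnitary : Matrix (Fin n) (Fin n) ℂ) with hUdef
  set D : Matrix (Fin n) (Fin n) ℂ := diagonal (RCLike.ofReal ∘ hH.eigenvalues) with hDdef
  have hspec : O = U * D * star U := hH.spectral_theorem
  have hU1 : star U * U = 1 := Matrix.UnitaryGroup.star_mul_self _
  have hOO : O * O = U * (D * D) * star U := by
    rw [hspec]
    simp only [Matrix.mul_assoc]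
    rw [← Matrix.mul_assoc (star U) U, hU1, Matrix.one_mul]
  have htrOO : (O * O).trace = (D * D).trace := by
    rw [hOO, Matrix.trace_mul_comm, ← Matrix.mul_assoc (star U) U, hU1, Matrix.one_mul]
  have htrO : O.trace = D.trace := by
    rw [hspec, Matrix.trace_mul_comm, ← Matrix.mul_assoc, hU1, Matrix.one_mul]
  have hDD : (D * D).trace = ∑ i, ((hH.eigenvalues i : ℝ) : ℂ) ^ 2 := by
    rw [hDdef, diagonal_mul_diagonal, trace_diagonal]
    simp [sq]
  have hDt : D.trace = ∑ i, ((hH.eigenvalues i : ℝ) : ℂ) := by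
    rw [hDdef, trace_diagonal]; rfl
  have hsum1 : ∑ i, hH.eigenvalues i = 1 := by
    have : ((∑ i, hH.eigenvalues i : ℝ) : ℂ) = 1 := by
      push_cast
      rw [← hDt, ← htrO, htr]
    exact_mod_cast this
  have hnn : ∀ i, 0 ≤ hH.eigenvalues i := hO.eigenvalues_nonneg
  have : (O * O).trace.re = ∑ i, (hH.eigenvalues i) ^ 2 := by
    rw [htrOO, hDD]
    push_cast
    rw [Complex.re_sum]
    apply Finset.sum_congr rfl
    intro i _
    rw [← Complex.ofReal_pow, Complex.ofReal_re]
  rw [this]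
  calc ∑ i, (hH.eigenvalues i) ^ 2 ≤ ∑ i, hH.eigenvalues i := by
        apply Finset.sum_le_sum
        intro i _
        have h1 : hH.eigenvalues i ≤ 1 := by
          rw [← hsum1]
          exact Finset.single_le_sum (fun j _ => hnn j) (mem_univ i)
        nlinarith [hnn i]
    _ = 1 := hsum1

/-- Bessel inequality: sum over the whole orthonormal family. -/
lemma bessel {d m : ℕ} (A : Fin m → Matrix (Fin d) (Fin d) ℂ) (hA : IsHSOrthonormal A)
    (O : Matrix (Fin d) (Fin d) ℂ) (hO : O.IsHermitian) :
    ∑ i, ((O * A i).trace.re) ^ 2 ≤ (O * O).trace.re := by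
  set c : Fin m → ℝ := fun i => (O * A i).trace.re with hcdef
  have hc : ∀ i, ((c i : ℝ) : ℂ) = (O * A i).trace := fun i => herm_trace_re hO (hA.1 i)
  set S : Matrix (Fin d) (Fin d) ℂ := ∑ i, (c i : ℂ) • A i with hSdef
  set M : Matrix (Fin d) (Fin d) ℂ := O - S with hMdef
  -- S is Hermitian
  have hSherm : S.IsHermitian := by
    rw [hSdef]
    unfold Matrix.IsHermitian
    rw [conjTranspose_sum]
    apply Finset.sum_congr rfl
    intro i _
    rw [conjTranspose_smul, (hA.1 i).eq, Complex.star_def, Complex.conj_ofReal]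
  have hMherm : M.IsHermitian := hO.sub hSherm
  -- trace (M * M) has nonnegative real part
  have hTrMM_nonneg : 0 ≤ (M * M).trace.re := by
    have h1 : M * M = M * Mᴴ := by rw [hMherm.eq]
    have h2 : (M * Mᴴ).trace = ∑ i, ∑ j, M i j * star (M i j) := by
      rw [Matrix.trace]
      simp only [Matrix.diag_apply, Matrix.mul_apply, Matrix.conjTranspose_apply]
    rw [h1, h2, Complex.re_sum]
    apply Finset.sum_nonneg
    intro i _
    rw [Complex.re_sum]
    apply Finset.sum_nonneg
    intro j _
    rw [Complex.star_def, Complex.mul_conj, Complex.ofReal_re]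
    exact Complex.normSq_nonneg _
  -- expand trace (M * M)
  have hOS : (O * S).trace = ((∑ i, (c i)^2 : ℝ) : ℂ) := by
    rw [hSdef, Matrix.mul_sum, trace_sum]
    push_cast
    apply Finset.sum_congr rfl
    intro i _
    rw [mul_smul_comm, trace_smul, smul_eq_mul, ← hc i]
    push_cast
    ring
  have hSO : (S * O).trace = ((∑ i, (c i)^2 : ℝ) : ℂ) := by
    rw [trace_mul_comm, hOS]
  have hSS : (S * S).trace = ((∑ i, (c i)^2 : ℝ) : ℂ) := by
    have inner : ∀ i j : Fin m, (((c i : ℂ)) • A i * ((c j : ℂ)) • A j).trace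
        = if i = j then ((c i : ℂ)) * ((c j : ℂ)) else 0 := by
      intro i j
      rw [smul_mul_assoc, mul_smul_comm, trace_smul, trace_smul, hA.2 i j]
      by_cases h : i = j <;> simp [h]
    rw [hSdef, Matrix.sum_mul, trace_sum]
    calc ∑ i, (((c i : ℂ)) • A i * ∑ j, ((c j : ℂ)) • A j).trace
        = ∑ i, ∑ j, (((c i : ℂ)) • A i * ((c j : ℂ)) • A j).trace := by
          apply Finset.sum_congr rfl
          intro i _
          rw [Matrix.mul_sum, trace_sum]
      _ = ∑ i, ∑ j, (if i = j then ((c i : ℂ)) * ((c j : ℂ)) else 0) := by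
          exact Finset.sum_congr rfl fun i _ => Finset.sum_congr rfl fun j _ => inner i j
      _ = ∑ i, ((c i : ℂ)) * ((c i : ℂ)) := by
          apply Finset.sum_congr rfl
          intro i _
          exact Finset.sum_ite_eq univ i (fun j => ((c i : ℂ)) * ((c j : ℂ))) |>.trans (by simp)
      _ = ((∑ i, (c i)^2 : ℝ) : ℂ) := by push_cast; ring_nf
  -- combine
  have hMM : (M * M).trace = (O * O).trace - ((∑ i, (c i)^2 : ℝ) : ℂ) := by
    rw [hMdef, Matrix.sub_mul, Matrix.mul_sub, Matrix.mul_sub, trace_sub, trace_sub, trace_sub,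
      hOS, hSO, hSS]
    ring
  have := hTrMM_nonneg
  rw [hMM] at this
  have hre : ((O * O).trace - ((∑ i, (c i)^2 : ℝ) : ℂ)).re
      = (O * O).trace.re - ∑ i, (c i)^2 := by
    rw [Complex.sub_re, Complex.ofReal_re]
  rw [hre] at this
  linarith

lemma party_bound {d : ℕ} (hd : 0 < d)
    (A : Fin (d ^ 2) → Matrix (Fin d) (Fin d) ℂ) (hA : IsHSOrthonormal A)
    (hA0 : A ⟨0, pow_pos hd 2⟩ = ((Real.sqrt d : ℂ))⁻¹ • (1 : Matrix (Fin d) (Fin d) ℂ))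
    (O : Matrix (Fin d) (Fin d) ℂ) (hO : IsDensityMatrix O) :
    ∑ i : Fin (d ^ 2 - 1),
      ((O * A ⟨(i : ℕ) + 1, by have := i.isLt; omega⟩).trace.re) ^ 2 ≤ 1 - 1 / (d : ℝ) := by
  have hd2 : 0 < d ^ 2 := pow_pos hd 2
  set c : Fin (d ^ 2) → ℝ := fun i => (O * A i).trace.re with hcdef
  have hbes : ∑ i, (c i) ^ 2 ≤ (O * O).trace.re := bessel A hA O hO.1.1
  have hpure : (O * O).trace.re ≤ 1 := purity_le_one hO.1 hO.2
  -- value at index 0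
  have hc0 : c ⟨0, hd2⟩ = (Real.sqrt d)⁻¹ := by
    rw [hcdef]
    simp only [hA0]
    rw [mul_smul_comm, Matrix.mul_one, trace_smul, smul_eq_mul, hO.2, mul_one,
      ← Complex.ofReal_inv, Complex.ofReal_re]
  have hc0sq : c ⟨0, hd2⟩ ^ 2 = 1 / (d : ℝ) := by
    rw [hc0, ← Real.sqrt_inv]
    rw [Real.sq_sqrt (by positivity)]
    rw [one_div]
  -- sum over nonzero indices
  set emb : Fin (d ^ 2 - 1) → Fin (d ^ 2) :=
    fun i => ⟨(i : ℕ) + 1, by have := i.isLt; omega⟩ with hembdef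
  have hinj : Function.Injective emb := by
    intro i j h
    apply Fin.ext
    have := Fin.mk.injEq _ _ _ _ ▸ h
    omega
  have himg : (Finset.univ.image emb) ⊆ Finset.univ.erase ⟨0, hd2⟩ := by
    intro x hx
    simp only [Finset.mem_image] at hx
    obtain ⟨i, _, rfl⟩ := hx
    refine Finset.mem_erase.2 ⟨?_, Finset.mem_univ _⟩
    intro h
    have := Fin.mk.injEq _ _ _ _ ▸ h
    omega
  have h1 : ∑ i : Fin (d ^ 2 - 1), (c (emb i)) ^ 2 = ∑ x ∈ Finset.univ.image emb, (c x) ^ 2 := by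
    rw [Finset.sum_image (fun a _ b _ h => hinj h)]
  have h2 : ∑ x ∈ Finset.univ.image emb, (c x) ^ 2 ≤ ∑ x ∈ Finset.univ.erase ⟨0, hd2⟩, (c x) ^ 2 :=
    Finset.sum_le_sum_of_subset_of_nonneg himg (fun _ _ _ => sq_nonneg _)
  have h3 : c ⟨0, hd2⟩ ^ 2 + ∑ x ∈ Finset.univ.erase ⟨0, hd2⟩, (c x) ^ 2 = ∑ x, (c x) ^ 2 :=
    Finset.add_sum_erase _ (fun x => (c x) ^ 2) (Finset.mem_univ _)
  have : ∑ i : Fin (d ^ 2 - 1), (c (emb i)) ^ 2 ≤ 1 - 1 / (d : ℝ) := by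
    rw [h1]
    have := h2
    linarith [h2, hbes, hpure, h3]
  exact this


/-- Sum of the diagonal entries (up to r) of an m×n array. -/
lemma diagSum {m n r : ℕ} (hrm : r ≤ m) (hrn : r ≤ n) (F : Fin m → Fin n → ℝ) :
    ∑ i : Fin m, ∑ j : Fin n, (if (i : ℕ) = (j : ℕ) ∧ (i : ℕ) < r then F i j else 0)
    = ∑ k : Fin r, F (Fin.castLE hrm k) (Fin.castLE hrn k) := by
  have inner : ∀ i : Fin m,
      (∑ j : Fin n, if (i : ℕ) = (j : ℕ) ∧ (i : ℕ) < r then F i j else 0)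
      = if h : (i : ℕ) < r then F i ⟨(i : ℕ), lt_of_lt_of_le h hrn⟩ else 0 := by
    intro i
    by_cases h : (i : ℕ) < r
    · rw [dif_pos h,
        Finset.sum_eq_single_of_mem (⟨(i : ℕ), lt_of_lt_of_le h hrn⟩ : Fin n)
          (Finset.mem_univ _)
          (fun j _ hj => by
            rw [if_neg]
            rintro ⟨h1, -⟩
            exact hj (Fin.ext h1.symm)),
        if_pos ⟨rfl, h⟩]
    · rw [dif_neg h]
      apply Finset.sum_eq_zero
      intro j _
      rw [if_neg]
      rintro ⟨-, h2⟩
      exact h h2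
  rw [Finset.sum_congr rfl (fun i _ => inner i)]
  set G : ℕ → ℝ := fun t =>
    if h : t < r then F ⟨t, lt_of_lt_of_le h hrm⟩ ⟨t, lt_of_lt_of_le h hrn⟩ else 0 with hGdef
  have hGi : ∀ i : Fin m,
      (if h : (i : ℕ) < r then F i ⟨(i : ℕ), lt_of_lt_of_le h hrn⟩ else 0) = G (i : ℕ) := by
    intro i
    rfl
  rw [Finset.sum_congr rfl (fun i _ => hGi i), Fin.sum_univ_eq_sum_range G m,
    ← Finset.sum_subset (Finset.range_subset_range.2 hrm) (fun t _ ht => by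
      rw [hGdef]; exact dif_neg (by simpa using ht)),
    ← Fin.sum_univ_eq_sum_range G r]
  apply Finset.sum_congr rfl
  intro k _
  rw [hGdef]
  exact dif_pos k.isLt

lemma mul_vecMulVec_mul {m n : ℕ} (M : Matrix (Fin m) (Fin m) ℝ) (N : Matrix (Fin n) (Fin n) ℝ)
    (a : Fin m → ℝ) (b : Fin n → ℝ) :
    M * vecMulVec a b * N = vecMulVec (M *ᵥ a) (b ᵥ* N) := by
  ext i j
  simp only [Matrix.mul_apply, vecMulVec_apply, Matrix.mulVec, Matrix.vecMul,
    dotProduct, Finset.sum_mul, Finset.mul_sum]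
  apply Finset.sum_congr rfl
  intro t _
  apply Finset.sum_congr rfl
  intro s _
  ring

lemma sum_castLE_sq_le {r m : ℕ} (h : r ≤ m) (x : Fin m → ℝ) :
    ∑ l : Fin r, (x (Fin.castLE h l)) ^ 2 ≤ ∑ i : Fin m, (x i) ^ 2 := by
  have him := Finset.sum_image (s := (Finset.univ : Finset (Fin r))) (g := Fin.castLE h)
    (f := fun i => (x i) ^ 2) (fun a _ b _ hab => Fin.castLE_injective h hab)
  calc ∑ l : Fin r, (x (Fin.castLE h l)) ^ 2
      = ∑ i ∈ Finset.univ.image (Fin.castLE h), (x i) ^ 2 := him.symm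
    _ ≤ ∑ i : Fin m, (x i) ^ 2 :=
      Finset.sum_le_sum_of_subset_of_nonneg (Finset.subset_univ _) (fun _ _ _ => sq_nonneg _)

lemma orth_norm_sq {m : ℕ} (U : Matrix (Fin m) (Fin m) ℝ) (hU : Uᵀ * U = 1) (a : Fin m → ℝ) :
    ∑ i, ((Uᵀ *ᵥ a) i) ^ 2 = ∑ i, (a i) ^ 2 := by
  have hUU : U * Uᵀ = 1 := mul_eq_one_comm.1 hU
  have h1 : ∑ i, ((Uᵀ *ᵥ a) i) ^ 2 = (Uᵀ *ᵥ a) ⬝ᵥ (Uᵀ *ᵥ a) := by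
    simp [dotProduct, sq]
  have h2 : ∑ i, (a i) ^ 2 = a ⬝ᵥ a := by simp [dotProduct, sq]
  rw [h1, h2, Matrix.mulVec_transpose, ← Matrix.dotProduct_mulVec,
    ← Matrix.mulVec_transpose U a, Matrix.mulVec_mulVec, hUU, Matrix.one_mulVec]

/-- (de Vicente bound.) For a separable state, the trace norm (sum of
singular values) of the traceless block `𝒯` of the correlation matrix — the block
obtained by deleting the row and column corresponding to `A_1 = 𝟙/√d_A`,
`B_1 = 𝟙/√d_B` — is at most `√((D−1)(d−1)/(Dd))`. -/
theorem traceless_block_trace_norm_bound_of_separable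
    (dA dB : ℕ) (hdA : 0 < dA) (hdB : 0 < dB)
    (A : Fin (dA ^ 2) → Matrix (Fin dA) (Fin dA) ℂ)
    (B : Fin (dB ^ 2) → Matrix (Fin dB) (Fin dB) ℂ)
    (hA : IsHSOrthonormal A) (hB : IsHSOrthonormal B)
    (hA0 : A ⟨0, pow_pos hdA 2⟩ = ((Real.sqrt dA : ℂ))⁻¹ • (1 : Matrix (Fin dA) (Fin dA) ℂ))
    (hB0 : B ⟨0, pow_pos hdB 2⟩ = ((Real.sqrt dB : ℂ))⁻¹ • (1 : Matrix (Fin dB) (Fin dB) ℂ))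
    (ρ : Matrix (Fin dA × Fin dB) (Fin dA × Fin dB) ℂ)
    (hρ : IsDensityMatrix ρ) (hsep : SeparableState ρ)
    (T : Matrix (Fin (dA ^ 2 - 1)) (Fin (dB ^ 2 - 1)) ℝ)
    (hT : ∀ i j, T i j =
      corrMat ρ A B ⟨(i : ℕ) + 1, by have := i.isLt; omega⟩
        ⟨(j : ℕ) + 1, by have := j.isLt; omega⟩)
    (τ : Fin (min dA dB ^ 2 - 1) → ℝ)
    (hτ : IsSingularValues T τ) :
    ∑ k, τ k ≤
      Real.sqrt
        ((((max dA dB : ℝ) - 1) * ((min dA dB : ℝ) - 1)) /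
          ((max dA dB : ℝ) * (min dA dB : ℝ))) := by
  classical
  obtain ⟨N, w, O, Q, hw0, hw1, hOd, hQd, hρeq⟩ := hsep
  obtain ⟨hτ0, -, U, V, hU, hV, hTsvd⟩ := hτ
  have hrm : min dA dB ^ 2 - 1 ≤ dA ^ 2 - 1 :=
    Nat.sub_le_sub_right (Nat.pow_le_pow_left (min_le_left _ _) 2) 1
  have hrn : min dA dB ^ 2 - 1 ≤ dB ^ 2 - 1 :=
    Nat.sub_le_sub_right (Nat.pow_le_pow_left (min_le_right _ _) 2) 1
  set a : Fin N → Fin (dA ^ 2 - 1) → ℝ :=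
    fun k i => (O k * A ⟨(i : ℕ) + 1, by have := i.isLt; omega⟩).trace.re with hadef
  set b : Fin N → Fin (dB ^ 2 - 1) → ℝ :=
    fun k j => (Q k * B ⟨(j : ℕ) + 1, by have := j.isLt; omega⟩).trace.re with hbdef
  -- T is a convex combination of outer products
  have hTsum : T = ∑ k, w k • vecMulVec (a k) (b k) := by
    ext i j
    rw [hT i j]
    have key : (ρ * (A ⟨(i : ℕ) + 1, by have := i.isLt; omega⟩ ⊗ₖ
        B ⟨(j : ℕ) + 1, by have := j.isLt; omega⟩)).trace
        = ((∑ k, w k * (a k i * b k j) : ℝ) : ℂ) := by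
      rw [hρeq, Matrix.sum_mul, trace_sum]
      push_cast
      apply Finset.sum_congr rfl
      intro k _
      rw [smul_mul_assoc, trace_smul, ← Matrix.mul_kronecker_mul, Matrix.trace_kronecker,
        smul_eq_mul,
        ← herm_trace_re (hOd k).1.1 (hA.1 _), ← herm_trace_re (hQd k).1.1 (hB.1 _)]
    show (ρ * _).trace.re = _
    rw [key, Complex.ofReal_re]
    simp only [Matrix.sum_apply, Matrix.smul_apply, vecMulVec_apply, smul_eq_mul]
  -- the diagonal matrix equals Uᵀ T V
  have hUTV : Uᵀ * T * V = svdDiag (dA ^ 2 - 1) (dB ^ 2 - 1) (min dA dB ^ 2 - 1) τ := by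
    rw [hTsvd]
    simp only [← Matrix.mul_assoc]
    rw [hU, Matrix.one_mul, Matrix.mul_assoc, hV, Matrix.mul_one]
  set u : Fin N → Fin (dA ^ 2 - 1) → ℝ := fun k => Uᵀ *ᵥ a k with hudef
  set v : Fin N → Fin (dB ^ 2 - 1) → ℝ := fun k => b k ᵥ* V with hvdef
  have hDsum : Uᵀ * T * V = ∑ k, w k • vecMulVec (u k) (v k) := by
    rw [hTsum, Matrix.mul_sum, Matrix.sum_mul]
    apply Finset.sum_congr rfl
    intro k _
    rw [Matrix.mul_smul, Matrix.smul_mul, mul_vecMulVec_mul]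
  -- entrywise
  have hDentry : ∀ (i : Fin (dA ^ 2 - 1)) (j : Fin (dB ^ 2 - 1)), svdDiag (dA ^ 2 - 1) (dB ^ 2 - 1) (min dA dB ^ 2 - 1) τ i j
      = ∑ k, w k * (u k i * v k j) := by
    intro i j
    rw [← hUTV, hDsum]
    simp only [Matrix.sum_apply, Matrix.smul_apply, vecMulVec_apply, smul_eq_mul]
  -- sum of τ as trace against the rectangular identity
  have hdiagτ : ∀ k : Fin (min dA dB ^ 2 - 1), svdDiag (dA ^ 2 - 1) (dB ^ 2 - 1) (min dA dB ^ 2 - 1) τ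
      (Fin.castLE hrm k) (Fin.castLE hrn k) = τ k := by
    intro k
    show (if h : ((k : ℕ) = (k : ℕ) ∧ (k : ℕ) < (min dA dB ^ 2 - 1)) then τ ⟨(k : ℕ), h.2⟩ else 0) = τ k
    rw [dif_pos ⟨rfl, k.isLt⟩]
  have step1 : ∑ k : Fin (min dA dB ^ 2 - 1), τ k
      = ∑ i : Fin (dA ^ 2 - 1), ∑ j : Fin (dB ^ 2 - 1),
          (if (i : ℕ) = (j : ℕ) ∧ (i : ℕ) < (min dA dB ^ 2 - 1) then
            svdDiag (dA ^ 2 - 1) (dB ^ 2 - 1) (min dA dB ^ 2 - 1) τ i j else 0) := by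
    refine Eq.trans ?_ (diagSum hrm hrn (fun i j => svdDiag (dA ^ 2 - 1) (dB ^ 2 - 1) (min dA dB ^ 2 - 1) τ i j)).symm
    exact (Finset.sum_congr rfl fun k _ => (hdiagτ k).symm)
  have step2 : ∑ k : Fin (min dA dB ^ 2 - 1), τ k
      = ∑ k : Fin N, w k * ∑ l : Fin (min dA dB ^ 2 - 1), u k (Fin.castLE hrm l) * v k (Fin.castLE hrn l) := by
    rw [step1]
    have swap : ∀ (i : Fin (dA ^ 2 - 1)) (j : Fin (dB ^ 2 - 1)), (if (i : ℕ) = (j : ℕ) ∧ (i : ℕ) < (min dA dB ^ 2 - 1) then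
        svdDiag (dA ^ 2 - 1) (dB ^ 2 - 1) (min dA dB ^ 2 - 1) τ i j else 0)
        = ∑ k : Fin N, (if (i : ℕ) = (j : ℕ) ∧ (i : ℕ) < (min dA dB ^ 2 - 1) then
            w k * (u k i * v k j) else 0) := by
      intro i j
      by_cases h : (i : ℕ) = (j : ℕ) ∧ (i : ℕ) < (min dA dB ^ 2 - 1)
      · simp only [if_pos h, hDentry i j]
      · simp only [if_neg h, Finset.sum_const_zero]
    calc ∑ i : Fin (dA ^ 2 - 1), ∑ j : Fin (dB ^ 2 - 1), (if (i : ℕ) = (j : ℕ) ∧ (i : ℕ) < (min dA dB ^ 2 - 1) then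
            svdDiag (dA ^ 2 - 1) (dB ^ 2 - 1) (min dA dB ^ 2 - 1) τ i j else 0)
        = ∑ i : Fin (dA ^ 2 - 1), ∑ j : Fin (dB ^ 2 - 1), ∑ k : Fin N, (if (i : ℕ) = (j : ℕ) ∧ (i : ℕ) < (min dA dB ^ 2 - 1) then
            w k * (u k i * v k j) else 0) := by
          exact Finset.sum_congr rfl fun i _ => Finset.sum_congr rfl fun j _ => swap i j
      _ = ∑ k : Fin N, ∑ i : Fin (dA ^ 2 - 1), ∑ j : Fin (dB ^ 2 - 1), (if (i : ℕ) = (j : ℕ) ∧ (i : ℕ) < (min dA dB ^ 2 - 1) then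
            w k * (u k i * v k j) else 0) := by
          refine Eq.trans (Finset.sum_congr rfl fun i _ => Finset.sum_comm) ?_
          exact Finset.sum_comm
      _ = ∑ k : Fin N, w k * ∑ l : Fin (min dA dB ^ 2 - 1), u k (Fin.castLE hrm l) * v k (Fin.castLE hrn l) := by
          apply Finset.sum_congr rfl
          intro k _
          rw [diagSum hrm hrn (fun i j => w k * (u k i * v k j)), Finset.mul_sum]
  -- per-term bound
  set α : ℝ := 1 - 1 / (dA : ℝ) with hαdef
  set β : ℝ := 1 - 1 / (dB : ℝ) with hβdef
  have hα0 : 0 ≤ α := by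
    rw [hαdef]
    have : 1 / (dA : ℝ) ≤ 1 := by
      apply div_le_one_of_le₀
      · exact_mod_cast hdA
      · positivity
    linarith
  have hβ0 : 0 ≤ β := by
    rw [hβdef]
    have : 1 / (dB : ℝ) ≤ 1 := by
      apply div_le_one_of_le₀
      · exact_mod_cast hdB
      · positivity
    linarith
  have hSk : ∀ k : Fin N,
      ∑ l : Fin (min dA dB ^ 2 - 1), u k (Fin.castLE hrm l) * v k (Fin.castLE hrn l) ≤ Real.sqrt (α * β) := by
    intro k
    have ha : ∑ i, (a k i) ^ 2 ≤ α := party_bound hdA A hA hA0 (O k) (hOd k)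
    have hb : ∑ j, (b k j) ^ 2 ≤ β := party_bound hdB B hB hB0 (Q k) (hQd k)
    have hu : ∑ i, (u k i) ^ 2 ≤ α := by
      rw [hudef]
      calc ∑ i, ((Uᵀ *ᵥ a k) i) ^ 2 = ∑ i, (a k i) ^ 2 := orth_norm_sq U hU (a k)
        _ ≤ α := ha
    have hv : ∑ j, (v k j) ^ 2 ≤ β := by
      rw [hvdef]
      calc ∑ j, ((b k ᵥ* V) j) ^ 2 = ∑ j, ((Vᵀ *ᵥ b k) j) ^ 2 := by
            rw [Matrix.mulVec_transpose]
        _ = ∑ j, (b k j) ^ 2 := orth_norm_sq V hV (b k)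
        _ ≤ β := hb
    set S : ℝ := ∑ l : Fin (min dA dB ^ 2 - 1), u k (Fin.castLE hrm l) * v k (Fin.castLE hrn l) with hSdef
    have hCS : S ^ 2 ≤ (∑ l : Fin (min dA dB ^ 2 - 1), (u k (Fin.castLE hrm l)) ^ 2) *
        (∑ l : Fin (min dA dB ^ 2 - 1), (v k (Fin.castLE hrn l)) ^ 2) :=
      Finset.sum_mul_sq_le_sq_mul_sq _ _ _
    have hsum_u : ∑ l : Fin (min dA dB ^ 2 - 1), (u k (Fin.castLE hrm l)) ^ 2 ≤ α :=
      le_trans (sum_castLE_sq_le hrm (u k)) hu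
    have hsum_v : ∑ l : Fin (min dA dB ^ 2 - 1), (v k (Fin.castLE hrn l)) ^ 2 ≤ β :=
      le_trans (sum_castLE_sq_le hrn (v k)) hv
    have hS2 : S ^ 2 ≤ α * β := by
      calc S ^ 2 ≤ (∑ l : Fin (min dA dB ^ 2 - 1), (u k (Fin.castLE hrm l)) ^ 2) *
          (∑ l : Fin (min dA dB ^ 2 - 1), (v k (Fin.castLE hrn l)) ^ 2) := hCS
        _ ≤ α * β := by
          apply mul_le_mul hsum_u hsum_v (Finset.sum_nonneg fun _ _ => sq_nonneg _) hα0
    calc S ≤ |S| := le_abs_self S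
      _ = Real.sqrt (S ^ 2) := (Real.sqrt_sq_eq_abs S).symm
      _ ≤ Real.sqrt (α * β) := Real.sqrt_le_sqrt hS2
  -- conclude
  have hfinal : ∑ k : Fin (min dA dB ^ 2 - 1), τ k ≤ Real.sqrt (α * β) := by
    rw [step2]
    calc ∑ k : Fin N, w k * ∑ l : Fin (min dA dB ^ 2 - 1), u k (Fin.castLE hrm l) * v k (Fin.castLE hrn l)
        ≤ ∑ k : Fin N, w k * Real.sqrt (α * β) := by
          apply Finset.sum_le_sum
          intro k _
          exact mul_le_mul_of_nonneg_left (hSk k) (hw0 k)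
      _ = Real.sqrt (α * β) := by rw [← Finset.sum_mul, hw1, one_mul]
  have hαβ : α * β = (((max dA dB : ℝ) - 1) * ((min dA dB : ℝ) - 1)) /
      ((max dA dB : ℝ) * (min dA dB : ℝ)) := by
    have hdA' : (0 : ℝ) < dA := by exact_mod_cast hdA
    have hdB' : (0 : ℝ) < dB := by exact_mod_cast hdB
    rcases le_total dA dB with h | h
    · have h' : (dA : ℝ) ≤ (dB : ℝ) := by exact_mod_cast h
      rw [hαdef, hβdef, max_eq_right h', min_eq_left h']
      field_simp
      try ring
    · have h' : (dB : ℝ) ≤ (dA : ℝ) := by exact_mod_cast h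
      rw [hαdef, hβdef, max_eq_left h', min_eq_right h']
      field_simp
      try ring
  rw [← hαβ]
  exact hfinal
end
end

section
/- Assume D := max{d_A,d_B} ≤ d³ where d := min{d_A,d_B}. Then for every separable state ρ on ℂ^{d_A} ⊗ ℂ^{d_B} in Filter Normal Form, the product of all d² operator-Schmidt coefficients (all singular values of the correlation matrix 𝒞) satisfies Π_{k=1}^{d²} σ_k(𝒞) ≤ α·β^{d²−1}, where α = 1/√(Dd) and β = √( (D−1)/(D(d²−1)) · (d−1)/(d(d²−1)) ). -/
open Matrix Finset
open scoped Kronecker ComplexOrder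

noncomputable section

namespace SVP

lemma trace_mul_herm_re {n : ℕ} {X Y : Matrix (Fin n) (Fin n) ℂ}
    (hX : X.IsHermitian) (hY : Y.IsHermitian) :
    (X * Y).trace = ((X * Y).trace.re : ℂ) := by
  have h : (starRingEnd ℂ) ((X * Y).trace) = (X * Y).trace := by
    have : star ((X * Y).trace) = (X * Y).trace := by
      rw [← Matrix.trace_conjTranspose, Matrix.conjTranspose_mul, hX.eq, hY.eq,
        Matrix.trace_mul_comm]
    exact this
  exact (Complex.conj_eq_iff_re.mp h).symm

lemma trace_herm_re {n : ℕ} {X : Matrix (Fin n) (Fin n) ℂ} (hX : X.IsHermitian) :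
    X.trace = (X.trace.re : ℂ) := by
  have := trace_mul_herm_re hX (Matrix.isHermitian_one (n := Fin n))
  rwa [mul_one] at this

/-- The submodule of Hermitian matrices. -/
def hermSub (n : ℕ) : Submodule ℝ (Matrix (Fin n) (Fin n) ℂ) where
  carrier := {X | X.IsHermitian}
  add_mem' := fun h1 h2 => h1.add h2
  zero_mem' := Matrix.isHermitian_zero
  smul_mem' := fun r X hX => by
    show ((r • X)ᴴ = r • X)
    rw [Matrix.conjTranspose_smul, star_trivial]
    exact congrArg _ hX

def hermToReal (n : ℕ) : hermSub n →ₗ[ℝ] Matrix (Fin n) (Fin n) ℝ where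
  toFun X := Matrix.of fun i j =>
    if i ≤ j then ((X : Matrix (Fin n) (Fin n) ℂ) i j).re
    else ((X : Matrix (Fin n) (Fin n) ℂ) i j).im
  map_add' := by
    intro X Y; ext i j
    by_cases h : i ≤ j <;> simp [h]
  map_smul' := by
    intro r X; ext i j
    by_cases h : i ≤ j <;> simp [h, Complex.smul_re, Complex.smul_im]

lemma hermToReal_inj (n : ℕ) : Function.Injective (hermToReal n) := by
  rw [← LinearMap.ker_eq_bot, LinearMap.ker_eq_bot']
  intro X h
  have key : ∀ i j : Fin n, i ≤ j → (X : Matrix (Fin n) (Fin n) ℂ) i j = 0 := by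
    intro i j hij
    have hre : ((X : Matrix (Fin n) (Fin n) ℂ) i j).re = 0 := by
      have := congrFun (congrFun (congrArg (fun M => (M : Matrix (Fin n) (Fin n) ℝ)) h) i) j
      simpa [hermToReal, hij] using this
    have him : ((X : Matrix (Fin n) (Fin n) ℂ) i j).im = 0 := by
      rcases eq_or_lt_of_le hij with rfl | hlt
      · have hh := congrFun (congrFun X.2 i) i
        rw [Matrix.conjTranspose_apply] at hh
        have := congrArg Complex.im hh
        simp at this
        linarith
      · have h2 := congrFun (congrFun (congrArg (fun M => (M : Matrix (Fin n) (Fin n) ℝ)) h) j) i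
        have hji : ¬ (j ≤ i) := not_le.mpr hlt
        simp [hermToReal, hji] at h2
        have hh := congrFun (congrFun X.2 j) i
        rw [Matrix.conjTranspose_apply] at hh
        have := congrArg Complex.im hh
        simp [h2] at this
        linarith
    exact Complex.ext hre him
  apply Subtype.ext
  ext i j
  rcases le_total i j with hij | hji
  · simpa using key i j hij
  · have hh := congrFun (congrFun X.2 i) j
    rw [Matrix.conjTranspose_apply] at hh
    rw [← hh, key j i hji]
    simp

instance (n : ℕ) : FiniteDimensional ℝ (hermSub n) :=
  FiniteDimensional.of_injective (hermToReal n) (hermToReal_inj n)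

lemma finrank_hermSub_le (n : ℕ) : Module.finrank ℝ (hermSub n) ≤ n ^ 2 := by
  have := LinearMap.finrank_le_finrank_of_injective (hermToReal_inj n)
  rw [Module.finrank_matrix, Fintype.card_fin, Module.finrank_self] at this
  simpa [← sq] using this

lemma rep_coeff {n m : ℕ} (A : Fin m → Matrix (Fin n) (Fin n) ℂ) (hA : IsHSOrthonormal A)
    (X : Matrix (Fin n) (Fin n) ℂ) (c : Fin m → ℝ) (hrep : X = ∑ i, c i • A i) (j : Fin m) :
    (X * A j).trace.re = c j := by
  subst hrep
  rw [Finset.sum_mul, Matrix.trace_sum, Complex.re_sum]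
  have : ∀ i : Fin m, ((c i • A i) * A j).trace.re = if i = j then c i else 0 := by
    intro i
    rw [Matrix.smul_mul, Matrix.trace_smul, hA.2 i j]
    by_cases h : i = j <;> simp [h, Complex.smul_re]
  rw [Finset.sum_congr rfl (fun i _ => this i), Finset.sum_ite_eq' Finset.univ j c]
  simp

lemma herm_parseval {n : ℕ} (hn : 0 < n) (A : Fin (n ^ 2) → Matrix (Fin n) (Fin n) ℂ)
    (hA : IsHSOrthonormal A) {X : Matrix (Fin n) (Fin n) ℂ} (hX : X.IsHermitian) :
    X = ∑ i, ((X * A i).trace.re) • A i := by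
  have : Nonempty (Fin (n ^ 2)) := ⟨⟨0, by positivity⟩⟩
  set Ah : Fin (n ^ 2) → hermSub n := fun i => ⟨A i, hA.1 i⟩ with hAh
  have li : LinearIndependent ℝ Ah := by
    rw [Fintype.linearIndependent_iff]
    intro g hg j
    have hg' : (0 : Matrix (Fin n) (Fin n) ℂ) = ∑ i, g i • A i := by
      have := congrArg ((hermSub n).subtype) hg
      rw [map_sum] at this
      simpa [Ah] using this.symm
    have := rep_coeff A hA 0 g hg' j
    simpa using this.symm
  have hrank : Fintype.card (Fin (n ^ 2)) = Module.finrank ℝ (hermSub n) := by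
    rw [Fintype.card_fin]
    exact le_antisymm (by simpa using li.fintype_card_le_finrank) (finrank_hermSub_le n)
  set b := basisOfLinearIndependentOfCardEqFinrank li hrank with hb
  have hbA : ∀ i, ((b i : hermSub n) : Matrix (Fin n) (Fin n) ℂ) = A i := by
    intro i; rw [hb, coe_basisOfLinearIndependentOfCardEqFinrank]
  have hsum := b.sum_repr ⟨X, hX⟩
  set c : Fin (n ^ 2) → ℝ := fun i => b.repr ⟨X, hX⟩ i with hc
  have hXc : X = ∑ i, c i • A i := by
    have := congrArg ((hermSub n).subtype) hsum
    rw [map_sum] at this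
    simp only [_root_.map_smul, Submodule.subtype_apply] at this
    simp only [hbA] at this
    simpa [hc] using this.symm
  conv_lhs => rw [hXc]
  exact Finset.sum_congr rfl fun i _ => by rw [rep_coeff A hA X c hXc i]

lemma herm_traceform {n : ℕ} (hn : 0 < n) (A : Fin (n ^ 2) → Matrix (Fin n) (Fin n) ℂ)
    (hA : IsHSOrthonormal A) {X Y : Matrix (Fin n) (Fin n) ℂ}
    (hX : X.IsHermitian) (hY : Y.IsHermitian) :
    (X * Y).trace.re = ∑ i, (X * A i).trace.re * (Y * A i).trace.re := by
  have hXc : X = ∑ i, ((X * A i).trace.re) • A i := herm_parseval hn A hA hX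
  conv_lhs => rw [hXc]
  rw [Finset.sum_mul, Matrix.trace_sum, Complex.re_sum]
  refine Finset.sum_congr rfl fun i _ => ?_
  rw [Matrix.smul_mul, Matrix.trace_smul, Complex.smul_re, smul_eq_mul,
    Matrix.trace_mul_comm (A i) Y]

lemma density_trace_mul_self_le {k : ℕ} {O : Matrix (Fin k) (Fin k) ℂ}
    (hO : IsDensityMatrix O) : (O * O).trace.re ≤ 1 := by
  obtain ⟨hpsd, htr⟩ := hO
  have hH := hpsd.1
  set W : Matrix (Fin k) (Fin k) ℂ := (Matrix.IsHermitian.eigenvectorUnitary hH : Matrix (Fin k) (Fin k) ℂ) with hW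
  set Dg : Matrix (Fin k) (Fin k) ℂ := Matrix.diagonal (RCLike.ofReal ∘ hH.eigenvalues) with hDg
  have hspec : O = W * Dg * star W := hH.spectral_theorem
  have hsw : star W * W = 1 := by
    exact_mod_cast Unitary.coe_star_mul_self (Matrix.IsHermitian.eigenvectorUnitary hH)
  have htrO2 : (O * O).trace = ∑ i, ((hH.eigenvalues i : ℂ) * (hH.eigenvalues i : ℂ)) := by
    have e1 : O * O = W * Dg * Dg * star W := by
      rw [hspec]
      have : (W * Dg * star W) * (W * Dg * star W)
          = W * (Dg * ((star W * W) * (Dg * star W))) := by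
        simp only [Matrix.mul_assoc]
      rw [this, hsw, one_mul, ← Matrix.mul_assoc, ← Matrix.mul_assoc]
    have h2 := congrArg Matrix.trace e1
    rw [Matrix.trace_mul_comm (W * Dg * Dg) (star W), ← Matrix.mul_assoc, ← Matrix.mul_assoc, hsw, one_mul, hDg,
      Matrix.diagonal_mul_diagonal, Matrix.trace_diagonal] at h2
    rw [h2]
    simp
  have htrO : (O.trace) = ∑ i, (hH.eigenvalues i : ℂ) := by
    have h2 := congrArg Matrix.trace hspec
    rw [Matrix.trace_mul_comm (W * Dg) (star W), ← Matrix.mul_assoc, hsw, one_mul, hDg,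
      Matrix.trace_diagonal] at h2
    rw [h2]
    simp
  have hsum1 : ∑ i, hH.eigenvalues i = 1 := by
    have := congrArg Complex.re (htrO.symm.trans htr)
    simpa [Complex.re_sum] using this
  have hnn : ∀ i ∈ Finset.univ, 0 ≤ hH.eigenvalues i := fun i _ => hpsd.eigenvalues_nonneg i
  calc (O * O).trace.re = ∑ i, hH.eigenvalues i ^ 2 := by
        rw [htrO2, Complex.re_sum]
        exact Finset.sum_congr rfl fun i _ => by
          rw [← Complex.ofReal_mul]; simp [sq]
    _ ≤ (∑ i, hH.eigenvalues i) ^ 2 := Finset.sum_sq_le_sq_sum_of_nonneg hnn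
    _ = 1 := by rw [hsum1]; norm_num


lemma sum_castLE {m M : ℕ} (hle : m ≤ M) (f : Fin M → ℝ)
    (hf : ∀ j : Fin M, ¬ ((j : ℕ) < m) → f j = 0) :
    ∑ j, f j = ∑ k : Fin m, f (Fin.castLE hle k) := by
  classical
  set g : ℕ → ℝ := fun i => if h : i < M then f ⟨i, h⟩ else 0 with hg
  have h1 : ∑ j, f j = ∑ i ∈ Finset.range M, g i := by
    rw [← Fin.sum_univ_eq_sum_range]
    exact Finset.sum_congr rfl fun j _ => by simp [hg]
  have h2 : ∑ i ∈ Finset.range M, g i = ∑ i ∈ Finset.range m, g i := by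
    refine (Finset.sum_subset (Finset.range_subset_range.mpr hle) ?_).symm
    intro i hiM him
    rw [Finset.mem_range] at hiM him
    simp only [hg, dif_pos hiM]
    exact hf ⟨i, hiM⟩ him
  have h3 : ∑ i ∈ Finset.range m, g i = ∑ k : Fin m, f (Fin.castLE hle k) := by
    rw [← Fin.sum_univ_eq_sum_range]
    exact Finset.sum_congr rfl fun k _ => by
      simp [hg, dif_pos (lt_of_lt_of_le k.isLt hle)]
      rfl
  rw [h1, h2, h3]

lemma bessel {N r : ℕ} (g : Fin r → Fin N → ℝ) (s : Finset (Fin r))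
    (hg : ∀ k ∈ s, ∀ l ∈ s, (∑ i, g k i * g l i) = if k = l then 1 else 0)
    (v : Fin N → ℝ) :
    ∑ k ∈ s, (∑ i, g k i * v i) ^ 2 ≤ ∑ i, v i ^ 2 := by
  classical
  set c : Fin r → ℝ := fun k => ∑ i, g k i * v i with hc
  have key : 0 ≤ ∑ i, (v i - ∑ k ∈ s, c k * g k i) ^ 2 :=
    Finset.sum_nonneg fun i _ => sq_nonneg _
  have e2 : ∑ i, v i * ∑ k ∈ s, c k * g k i = ∑ k ∈ s, c k ^ 2 := by
    have h0 : ∀ i, v i * ∑ k ∈ s, c k * g k i = ∑ k ∈ s, c k * (g k i * v i) := by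
      intro i; rw [Finset.mul_sum]; exact Finset.sum_congr rfl fun k _ => by ring
    rw [Finset.sum_congr rfl fun i _ => h0 i, Finset.sum_comm]
    refine Finset.sum_congr rfl fun k hk => ?_
    rw [← Finset.mul_sum]
    show c k * c k = _
    ring
  have e3 : ∑ i, (∑ k ∈ s, c k * g k i) * (∑ l ∈ s, c l * g l i) = ∑ k ∈ s, c k ^ 2 := by
    have h0 : ∀ i, (∑ k ∈ s, c k * g k i) * (∑ l ∈ s, c l * g l i)
        = ∑ k ∈ s, ∑ l ∈ s, (c k * c l) * (g k i * g l i) := by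
      intro i; rw [Finset.sum_mul_sum]
      exact Finset.sum_congr rfl fun k _ => Finset.sum_congr rfl fun l _ => by ring
    rw [Finset.sum_congr rfl fun i _ => h0 i, Finset.sum_comm]
    refine Finset.sum_congr rfl fun k hk => ?_
    rw [Finset.sum_comm]
    have h1 : ∀ l ∈ s, ∑ i, (c k * c l) * (g k i * g l i) = if k = l then c k * c l else 0 := by
      intro l hl
      rw [← Finset.mul_sum, hg k hk l hl]
      by_cases h : k = l <;> simp [h]
    rw [Finset.sum_congr rfl h1, Finset.sum_ite_eq s k (fun l => c k * c l), if_pos hk]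
    ring
  have expand : ∑ i, (v i - ∑ k ∈ s, c k * g k i) ^ 2
      = ∑ i, v i ^ 2 - 2 * (∑ k ∈ s, c k ^ 2) + ∑ k ∈ s, c k ^ 2 := by
    have h0 : ∀ i, (v i - ∑ k ∈ s, c k * g k i) ^ 2
        = v i ^ 2 - 2 * (v i * ∑ k ∈ s, c k * g k i)
          + (∑ k ∈ s, c k * g k i) * (∑ l ∈ s, c l * g l i) := by
      intro i; ring
    rw [Finset.sum_congr rfl fun i _ => h0 i, Finset.sum_add_distrib, Finset.sum_sub_distrib,
      ← Finset.mul_sum, e2, e3]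
  rw [expand] at key
  have : ∑ k ∈ s, c k ^ 2 ≤ ∑ i, v i ^ 2 := by linarith
  exact this

lemma sum_mul_le_sqrt_mul_sqrt {ι : Type*} (s : Finset ι) (f g : ι → ℝ) :
    ∑ i ∈ s, f i * g i ≤ Real.sqrt (∑ i ∈ s, f i ^ 2) * Real.sqrt (∑ i ∈ s, g i ^ 2) := by
  have h := Finset.sum_mul_sq_le_sq_mul_sq s f g
  have h1 : ∑ i ∈ s, f i * g i ≤ |∑ i ∈ s, f i * g i| := le_abs_self _
  have h2 : |∑ i ∈ s, f i * g i| = Real.sqrt ((∑ i ∈ s, f i * g i) ^ 2) :=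
    (Real.sqrt_sq_eq_abs _).symm
  rw [← Real.sqrt_mul (Finset.sum_nonneg fun i _ => sq_nonneg (f i))]
  refine h1.trans ?_
  rw [h2]
  exact Real.sqrt_le_sqrt h

lemma prod_le_div_pow {r : ℕ} (s : Finset (Fin r)) (z : Fin r → ℝ) (N : ℕ)
    (hz : ∀ i ∈ s, 0 ≤ z i) (hcard : s.card = N) (hN : 0 < N) (S : ℝ)
    (hS : ∑ i ∈ s, z i ≤ S) :
    ∏ i ∈ s, z i ≤ (S / N) ^ N := by
  have hNR : (N : ℝ) ≠ 0 := by exact_mod_cast hN.ne'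
  have hw : ∀ i ∈ s, 0 ≤ (1 : ℝ) / N := fun i _ => by positivity
  have hw1 : ∑ _i ∈ s, (1 : ℝ) / N = 1 := by
    rw [Finset.sum_const, hcard, nsmul_eq_mul]
    field_simp
  have hkey := Real.geom_mean_le_arith_mean_weighted s (fun _ => (1 : ℝ) / N) z hw hw1 hz
  have h2 : ∑ i ∈ s, (1 : ℝ) / N * z i ≤ S / N := by
    rw [← Finset.mul_sum]
    rw [div_eq_mul_inv S, mul_comm S, ← one_div]
    exact mul_le_mul_of_nonneg_left hS (by positivity)
  have h3 : (∏ i ∈ s, z i ^ ((1 : ℝ) / N)) ^ N = ∏ i ∈ s, z i := by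
    rw [← Finset.prod_pow]
    refine Finset.prod_congr rfl fun i hi => ?_
    rw [← Real.rpow_natCast (z i ^ ((1 : ℝ) / N)) N, ← Real.rpow_mul (hz i hi),
      one_div, inv_mul_cancel₀ hNR, Real.rpow_one]
  calc ∏ i ∈ s, z i = (∏ i ∈ s, z i ^ ((1 : ℝ) / N)) ^ N := h3.symm
    _ ≤ (S / N) ^ N := by
        refine pow_le_pow_left₀ (Finset.prod_nonneg fun i hi => Real.rpow_nonneg (hz i hi) _)
          (hkey.trans h2) N

lemma rcol_ortho {N : ℕ} (hx : Fin N → ℝ) (c : ℝ) (hc : 2 * c = c ^ 2 * (∑ t, hx t ^ 2))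
    (p q : Fin N) :
    ∑ t, ((if t = p then 1 else 0) - c * hx p * hx t) *
        ((if t = q then 1 else 0) - c * hx q * hx t)
      = if p = q then 1 else 0 := by
  classical
  have expand : ∀ t, ((if t = p then (1 : ℝ) else 0) - c * hx p * hx t) *
      ((if t = q then 1 else 0) - c * hx q * hx t)
      = (if t = p then (1 : ℝ) else 0) * (if t = q then 1 else 0)
        - c * hx q * ((if t = p then 1 else 0) * hx t)
        - c * hx p * ((if t = q then 1 else 0) * hx t)
        + (c * hx p) * (c * hx q) * hx t ^ 2 := by intro t; ring
  rw [Finset.sum_congr rfl fun t _ => expand t, Finset.sum_add_distrib,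
    Finset.sum_sub_distrib, Finset.sum_sub_distrib, ← Finset.mul_sum, ← Finset.mul_sum,
    ← Finset.mul_sum]
  have e1 : ∑ t, (if t = p then (1 : ℝ) else 0) * (if t = q then 1 else 0)
      = if p = q then 1 else 0 := by
    have h0 : ∀ t, (if t = p then (1 : ℝ) else 0) * (if t = q then 1 else 0)
        = if t = p then (if p = q then (1 : ℝ) else 0) else 0 := by
      intro t
      by_cases h1 : t = p
      · subst h1; simp
      · simp [h1]
    rw [Finset.sum_congr rfl fun t _ => h0 t, Finset.sum_ite_eq' Finset.univ p
      (fun _ => if p = q then (1 : ℝ) else 0)]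
    simp
  have e2 : ∑ t, (if t = p then (1 : ℝ) else 0) * hx t = hx p := by
    simp [ite_mul, Finset.sum_ite_eq']
  have e3 : ∑ t, (if t = q then (1 : ℝ) else 0) * hx t = hx q := by
    simp [ite_mul, Finset.sum_ite_eq']
  rw [e1, e2, e3]
  linear_combination (-(hx p * hx q)) * hc

lemma mulVec_dot {N : ℕ} (U : Matrix (Fin N) (Fin N) ℝ) (hU : Uᵀ * U = 1)
    (v w : Fin N → ℝ) :
    ∑ i, (U.mulVec v) i * (U.mulVec w) i = ∑ t, v t * w t := by
  have h1 : ∑ i, (U.mulVec v) i * (U.mulVec w) i = (U.mulVec v) ⬝ᵥ (U.mulVec w) := rfl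
  rw [h1, Matrix.dotProduct_mulVec, ← Matrix.mulVec_transpose, Matrix.mulVec_mulVec, hU,
    Matrix.one_mulVec]
  rfl


lemma fnf_trace_A {dA dB : ℕ} (hdA : 0 < dA)
    (ρ : Matrix (Fin dA × Fin dB) (Fin dA × Fin dB) ℂ) (hρtr : ρ.trace = 1)
    (hfnf1 : ∀ M : Matrix (Fin dA) (Fin dA) ℂ, M.IsHermitian → M.trace = 0 →
      (ρ * (M ⊗ₖ (1 : Matrix (Fin dB) (Fin dB) ℂ))).trace = 0)
    (M : Matrix (Fin dA) (Fin dA) ℂ) (hM : M.IsHermitian) :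
    (ρ * (M ⊗ₖ (1 : Matrix (Fin dB) (Fin dB) ℂ))).trace = ((M.trace.re / dA : ℝ) : ℂ) := by
  set r : ℝ := M.trace.re / dA with hr
  have hda : (dA : ℝ) ≠ 0 := Nat.cast_ne_zero.mpr hdA.ne'
  have hMr : M.trace = (M.trace.re : ℂ) := trace_herm_re hM
  have hherm : (M - (r : ℝ) • (1 : Matrix (Fin dA) (Fin dA) ℂ)).IsHermitian := by
    refine hM.sub ?_
    show ((r : ℝ) • (1 : Matrix (Fin dA) (Fin dA) ℂ))ᴴ = _
    rw [Matrix.conjTranspose_smul, star_trivial, Matrix.conjTranspose_one]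
  have htr0 : (M - (r : ℝ) • (1 : Matrix (Fin dA) (Fin dA) ℂ)).trace = 0 := by
    rw [Matrix.trace_sub, Matrix.trace_smul, Matrix.trace_one, Fintype.card_fin, hMr,
      Complex.real_smul, sub_eq_zero]
    have : r * dA = M.trace.re := by rw [hr]; field_simp
    exact_mod_cast this.symm
  have h0 := hfnf1 _ hherm htr0
  have hsplit : (M ⊗ₖ (1 : Matrix (Fin dB) (Fin dB) ℂ))
      = (M - (r : ℝ) • 1) ⊗ₖ (1 : Matrix (Fin dB) (Fin dB) ℂ)
        + ((r : ℝ) • (1 : Matrix (Fin dA) (Fin dA) ℂ)) ⊗ₖ (1 : Matrix (Fin dB) (Fin dB) ℂ) := by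
    rw [← Matrix.add_kronecker, sub_add_cancel]
  rw [hsplit, Matrix.mul_add, Matrix.trace_add, h0, zero_add, Matrix.smul_kronecker,
    Matrix.one_kronecker_one, Matrix.mul_smul, Matrix.mul_one, Matrix.trace_smul, hρtr,
    Complex.real_smul, mul_one]

lemma fnf_trace_B {dA dB : ℕ} (hdB : 0 < dB)
    (ρ : Matrix (Fin dA × Fin dB) (Fin dA × Fin dB) ℂ) (hρtr : ρ.trace = 1)
    (hfnf2 : ∀ M : Matrix (Fin dB) (Fin dB) ℂ, M.IsHermitian → M.trace = 0 →
      (ρ * ((1 : Matrix (Fin dA) (Fin dA) ℂ) ⊗ₖ M)).trace = 0)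
    (M : Matrix (Fin dB) (Fin dB) ℂ) (hM : M.IsHermitian) :
    (ρ * ((1 : Matrix (Fin dA) (Fin dA) ℂ) ⊗ₖ M)).trace = ((M.trace.re / dB : ℝ) : ℂ) := by
  set r : ℝ := M.trace.re / dB with hr
  have hdb : (dB : ℝ) ≠ 0 := Nat.cast_ne_zero.mpr hdB.ne'
  have hMr : M.trace = (M.trace.re : ℂ) := trace_herm_re hM
  have hherm : (M - (r : ℝ) • (1 : Matrix (Fin dB) (Fin dB) ℂ)).IsHermitian := by
    refine hM.sub ?_
    show ((r : ℝ) • (1 : Matrix (Fin dB) (Fin dB) ℂ))ᴴ = _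
    rw [Matrix.conjTranspose_smul, star_trivial, Matrix.conjTranspose_one]
  have htr0 : (M - (r : ℝ) • (1 : Matrix (Fin dB) (Fin dB) ℂ)).trace = 0 := by
    rw [Matrix.trace_sub, Matrix.trace_smul, Matrix.trace_one, Fintype.card_fin, hMr,
      Complex.real_smul, sub_eq_zero]
    have : r * dB = M.trace.re := by rw [hr]; field_simp
    exact_mod_cast this.symm
  have h0 := hfnf2 _ hherm htr0
  have hsplit : ((1 : Matrix (Fin dA) (Fin dA) ℂ) ⊗ₖ M)
      = (1 : Matrix (Fin dA) (Fin dA) ℂ) ⊗ₖ (M - (r : ℝ) • 1)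
        + (1 : Matrix (Fin dA) (Fin dA) ℂ) ⊗ₖ ((r : ℝ) • (1 : Matrix (Fin dB) (Fin dB) ℂ)) := by
    rw [← Matrix.kronecker_add, sub_add_cancel]
  rw [hsplit, Matrix.mul_add, Matrix.trace_add, h0, zero_add, Matrix.kronecker_smul,
    Matrix.one_kronecker_one, Matrix.mul_smul, Matrix.mul_one, Matrix.trace_smul, hρtr,
    Complex.real_smul, mul_one]

lemma rcol_diag {N : ℕ} (hx : Fin N → ℝ) (c η s' α : ℝ) (p : Fin N)
    (hc : 2 * c = c ^ 2 * (∑ t, hx t ^ 2)) (hηp : η = hx p) (hη : η ≠ 0 → s' = α) :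
    ∑ t, ((if t = p then 1 else 0) - c * η * hx t) *
        (s' * (if t = p then 1 else 0) - c * η * (α * hx t)) = s' := by
  classical
  have expand : ∀ t, ((if t = p then (1:ℝ) else 0) - c * η * hx t) *
      (s' * (if t = p then 1 else 0) - c * η * (α * hx t))
      = s' * ((if t = p then (1:ℝ) else 0) * (if t = p then 1 else 0))
        - (c * η * α) * ((if t = p then 1 else 0) * hx t)
        - (c * η * s') * ((if t = p then 1 else 0) * hx t)
        + (c * η) * (c * η) * α * hx t ^ 2 := by intro t; ring
  rw [Finset.sum_congr rfl fun t _ => expand t, Finset.sum_add_distrib, Finset.sum_sub_distrib,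
    Finset.sum_sub_distrib, ← Finset.mul_sum, ← Finset.mul_sum, ← Finset.mul_sum,
    ← Finset.mul_sum]
  have e1 : ∑ t, (if t = p then (1:ℝ) else 0) * (if t = p then 1 else 0) = 1 := by
    simp [ite_mul, Finset.sum_ite_eq']
  have e2 : ∑ t, (if t = p then (1:ℝ) else 0) * hx t = hx p := by
    simp [ite_mul, Finset.sum_ite_eq']
  rw [e1, e2, ← hηp, mul_one]
  by_cases h : η = 0
  · simp [h]
  · rw [hη h]
    linear_combination (-(α * η ^ 2)) * hc

end SVP

set_option maxHeartbeats 2000000 in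
/-- Assuming `D ≤ d³`, for every separable state in Filter Normal
Form the product of all `d²` operator-Schmidt coefficients satisfies
`Π_k σ_k ≤ α·β^{d²−1}` with `α = 1/√(Dd)` and
`β = √((D−1)/(D(d²−1)) · (d−1)/(d(d²−1)))`. -/
theorem singular_value_product_bound_of_separable_FNF
    (dA dB : ℕ) (hdA : 0 < dA) (hdB : 0 < dB)
    (hDd : max dA dB ≤ min dA dB ^ 3)
    (A : Fin (dA ^ 2) → Matrix (Fin dA) (Fin dA) ℂ)
    (B : Fin (dB ^ 2) → Matrix (Fin dB) (Fin dB) ℂ)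
    (hA : IsHSOrthonormal A) (hB : IsHSOrthonormal B)
    (ρ : Matrix (Fin dA × Fin dB) (Fin dA × Fin dB) ℂ)
    (hρ : IsDensityMatrix ρ) (hsep : SeparableState ρ) (hfnf : IsFNF ρ)
    (σ : Fin (min dA dB ^ 2) → ℝ)
    (hσ : IsSingularValues (corrMat ρ A B) σ) :
    ∏ k, σ k ≤
      (1 / Real.sqrt ((max dA dB : ℝ) * (min dA dB : ℝ))) *
        (Real.sqrt
          ((((max dA dB : ℝ) - 1) / ((max dA dB : ℝ) * ((min dA dB : ℝ) ^ 2 - 1))) *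
           (((min dA dB : ℝ) - 1) / ((min dA dB : ℝ) * ((min dA dB : ℝ) ^ 2 - 1))))) ^
          (min dA dB ^ 2 - 1) := by
  classical
  obtain ⟨hσ0, hσanti, U, V, hU, hV, hC⟩ := hσ
  obtain ⟨ns, pw, O, Q, hp0, hp1, hO, hQ, hρd⟩ := hsep
  obtain ⟨hρpsd, hρtr⟩ := hρ
  have hdmin : 0 < min dA dB := lt_min hdA hdB
  have hddpos : 0 < min dA dB ^ 2 := by positivity
  have hddA : min dA dB ^ 2 ≤ dA ^ 2 := Nat.pow_le_pow_left (min_le_left _ _) 2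
  have hddB : min dA dB ^ 2 ≤ dB ^ 2 := Nat.pow_le_pow_left (min_le_right _ _) 2
  set C := corrMat ρ A B with hCdef
  set Dm := svdDiag (dA ^ 2) (dB ^ 2) (min dA dB ^ 2) σ with hDm
  set a : Fin ns → Fin (dA ^ 2) → ℝ := fun m i => ((O m * A i).trace).re with ha
  set b : Fin ns → Fin (dB ^ 2) → ℝ := fun m j => ((Q m * B j).trace).re with hb
  have hherm1A : (1 : Matrix (Fin dA) (Fin dA) ℂ).IsHermitian := Matrix.isHermitian_one
  have hherm1B : (1 : Matrix (Fin dB) (Fin dB) ℂ).IsHermitian := Matrix.isHermitian_one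
  -- Parseval-type facts, A side
  have haa : ∀ m, ∑ i, a m i ^ 2 ≤ 1 := by
    intro m
    have h := SVP.herm_traceform hdA A hA (hO m).1.1 (hO m).1.1
    have h2 := SVP.density_trace_mul_self_le (hO m)
    calc ∑ i, a m i ^ 2 = ∑ i, (O m * A i).trace.re * (O m * A i).trace.re := by
          refine Finset.sum_congr rfl fun i _ => ?_
          rw [sq]
      _ = (O m * O m).trace.re := h.symm
      _ ≤ 1 := h2
  have hta : ∀ m, ∑ i, a m i * (A i).trace.re = 1 := by
    intro m
    have h := SVP.herm_traceform hdA A hA (hO m).1.1 hherm1A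
    simp only [Matrix.one_mul, Matrix.mul_one] at h
    rw [(hO m).2] at h
    simpa using h.symm
  have htt : ∑ i, ((A i).trace.re) ^ 2 = (dA : ℝ) := by
    have h := SVP.herm_traceform hdA A hA hherm1A hherm1A
    simp only [Matrix.one_mul, Matrix.mul_one, Matrix.trace_one, Fintype.card_fin,
      Complex.natCast_re] at h
    calc ∑ i, ((A i).trace.re) ^ 2 = ∑ i, (A i).trace.re * (A i).trace.re :=
          Finset.sum_congr rfl fun i _ => pow_two _
      _ = (dA : ℝ) := h.symm
  -- B side
  have hbb : ∀ m, ∑ j, b m j ^ 2 ≤ 1 := by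
    intro m
    have h := SVP.herm_traceform hdB B hB (hQ m).1.1 (hQ m).1.1
    have h2 := SVP.density_trace_mul_self_le (hQ m)
    calc ∑ j, b m j ^ 2 = ∑ j, (Q m * B j).trace.re * (Q m * B j).trace.re := by
          refine Finset.sum_congr rfl fun j _ => ?_
          rw [sq]
      _ = (Q m * Q m).trace.re := h.symm
      _ ≤ 1 := h2
  have htb : ∀ m, ∑ j, b m j * (B j).trace.re = 1 := by
    intro m
    have h := SVP.herm_traceform hdB B hB (hQ m).1.1 hherm1B
    simp only [Matrix.one_mul, Matrix.mul_one] at h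
    rw [(hQ m).2] at h
    simpa using h.symm
  have httB : ∑ j, ((B j).trace.re) ^ 2 = (dB : ℝ) := by
    have h := SVP.herm_traceform hdB B hB hherm1B hherm1B
    simp only [Matrix.one_mul, Matrix.mul_one, Matrix.trace_one, Fintype.card_fin,
      Complex.natCast_re] at h
    calc ∑ j, ((B j).trace.re) ^ 2 = ∑ j, (B j).trace.re * (B j).trace.re :=
          Finset.sum_congr rfl fun j _ => pow_two _
      _ = (dB : ℝ) := h.symm
  -- decomposition of the correlation matrix
  have hCdec : ∀ i j, C i j = ∑ m, pw m * (a m i * b m j) := by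
    intro i j
    show (ρ * (A i ⊗ₖ B j)).trace.re = _
    rw [hρd, Finset.sum_mul, Matrix.trace_sum, Complex.re_sum]
    refine Finset.sum_congr rfl fun m _ => ?_
    rw [Matrix.smul_mul, Matrix.trace_smul, ← Matrix.mul_kronecker_mul, Matrix.trace_kronecker,
      SVP.trace_mul_herm_re (hO m).1.1 (hA.1 i), SVP.trace_mul_herm_re (hQ m).1.1 (hB.1 j),
      smul_eq_mul, ← Complex.ofReal_mul, ← Complex.ofReal_mul, Complex.ofReal_re]
  -- FNF sums
  have hfa : ∀ i, ∑ m, pw m * a m i = (A i).trace.re / dA := by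
    intro i
    have h := SVP.fnf_trace_A hdA ρ hρtr hfnf.1 (A i) (hA.1 i)
    have h2 : (ρ * (A i ⊗ₖ (1 : Matrix (Fin dB) (Fin dB) ℂ))).trace
        = ∑ m, ((pw m : ℂ) * (a m i : ℂ)) := by
      rw [hρd, Finset.sum_mul, Matrix.trace_sum]
      refine Finset.sum_congr rfl fun m _ => ?_
      rw [Matrix.smul_mul, Matrix.trace_smul, ← Matrix.mul_kronecker_mul, Matrix.trace_kronecker,
        Matrix.mul_one, (hQ m).2, mul_one, SVP.trace_mul_herm_re (hO m).1.1 (hA.1 i),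
        smul_eq_mul]
    rw [h2] at h
    have h3 := congrArg Complex.re h
    rw [Complex.re_sum] at h3
    simpa [← Complex.ofReal_mul] using h3
  have hfb : ∀ j, ∑ m, pw m * b m j = (B j).trace.re / dB := by
    intro j
    have h := SVP.fnf_trace_B hdB ρ hρtr hfnf.2 (B j) (hB.1 j)
    have h2 : (ρ * ((1 : Matrix (Fin dA) (Fin dA) ℂ) ⊗ₖ B j)).trace
        = ∑ m, ((pw m : ℂ) * (b m j : ℂ)) := by
      rw [hρd, Finset.sum_mul, Matrix.trace_sum]
      refine Finset.sum_congr rfl fun m _ => ?_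
      rw [Matrix.smul_mul, Matrix.trace_smul, ← Matrix.mul_kronecker_mul, Matrix.trace_kronecker,
        Matrix.mul_one, (hO m).2, one_mul, SVP.trace_mul_herm_re (hQ m).1.1 (hB.1 j),
        smul_eq_mul]
    rw [h2] at h
    have h3 := congrArg Complex.re h
    rw [Complex.re_sum] at h3
    simpa [← Complex.ofReal_mul] using h3
  -- normalized trace vectors
  have hsqApos : (0 : ℝ) < Real.sqrt dA := Real.sqrt_pos.mpr (by exact_mod_cast hdA)
  have hsqBpos : (0 : ℝ) < Real.sqrt dB := Real.sqrt_pos.mpr (by exact_mod_cast hdB)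
  have hsqA2 : Real.sqrt dA * Real.sqrt dA = (dA : ℝ) := Real.mul_self_sqrt (by positivity)
  have hsqB2 : Real.sqrt dB * Real.sqrt dB = (dB : ℝ) := Real.mul_self_sqrt (by positivity)
  have hdAne : (dA : ℝ) ≠ 0 := by positivity
  have hdBne : (dB : ℝ) ≠ 0 := by positivity
  set u : Fin (dA ^ 2) → ℝ := fun i => (A i).trace.re / Real.sqrt dA with hu
  set w : Fin (dB ^ 2) → ℝ := fun j => (B j).trace.re / Real.sqrt dB with hw
  have hu2 : ∑ i, u i ^ 2 = 1 := by
    have : ∀ i, u i ^ 2 = ((A i).trace.re) ^ 2 / (dA : ℝ) := by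
      intro i
      rw [hu]
      show ((A i).trace.re / Real.sqrt dA) ^ 2 = _
      rw [div_pow, sq (Real.sqrt (dA : ℝ)), hsqA2]
    rw [Finset.sum_congr rfl fun i _ => this i, ← Finset.sum_div, htt, div_self hdAne]
  have hw2 : ∑ j, w j ^ 2 = 1 := by
    have : ∀ j, w j ^ 2 = ((B j).trace.re) ^ 2 / (dB : ℝ) := by
      intro j
      rw [hw]
      show ((B j).trace.re / Real.sqrt dB) ^ 2 = _
      rw [div_pow, sq (Real.sqrt (dB : ℝ)), hsqB2]
    rw [Finset.sum_congr rfl fun j _ => this j, ← Finset.sum_div, httB, div_self hdBne]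
  have hau : ∀ m, ∑ i, a m i * u i = 1 / Real.sqrt dA := by
    intro m
    have : ∀ i, a m i * u i = (a m i * (A i).trace.re) / Real.sqrt dA := by
      intro i; rw [hu]; show a m i * ((A i).trace.re / Real.sqrt dA) = _; ring
    rw [Finset.sum_congr rfl fun i _ => this i, ← Finset.sum_div, hta m]
  have hbw : ∀ m, ∑ j, b m j * w j = 1 / Real.sqrt dB := by
    intro m
    have : ∀ j, b m j * w j = (b m j * (B j).trace.re) / Real.sqrt dB := by
      intro j; rw [hw]; show b m j * ((B j).trace.re / Real.sqrt dB) = _; ring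
    rw [Finset.sum_congr rfl fun j _ => this j, ← Finset.sum_div, htb m]
  set α : ℝ := 1 / (Real.sqrt dA * Real.sqrt dB) with hα
  have hαpos : 0 < α := by rw [hα]; positivity
  have hCw : ∀ i, ∑ j, C i j * w j = α * u i := by
    intro i
    have h1 : ∀ j, C i j * w j = ∑ m, pw m * (a m i * (b m j * w j)) := by
      intro j; rw [hCdec i j, Finset.sum_mul]
      exact Finset.sum_congr rfl fun m _ => by ring
    rw [Finset.sum_congr rfl fun j _ => h1 j, Finset.sum_comm]
    have h2 : ∀ m, ∑ j, pw m * (a m i * (b m j * w j)) = pw m * a m i * (1 / Real.sqrt dB) := by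
      intro m
      rw [← Finset.mul_sum]
      have : ∑ j, a m i * (b m j * w j) = a m i * ∑ j, b m j * w j := by
        rw [Finset.mul_sum]
      rw [this, hbw m]
      ring
    rw [Finset.sum_congr rfl fun m _ => h2 m, ← Finset.sum_mul, hfa i]
    rw [hα, hu]
    show (A i).trace.re / (dA : ℝ) * (1 / Real.sqrt dB)
        = 1 / (Real.sqrt dA * Real.sqrt dB) * ((A i).trace.re / Real.sqrt dA)
    rw [div_mul_div_comm, div_mul_div_comm, div_eq_div_iff (by positivity) (by positivity)]
    linear_combination ((A i).trace.re * Real.sqrt dB) * hsqA2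
  have hCu : ∀ j, ∑ i, C i j * u i = α * w j := by
    intro j
    have h1 : ∀ i, C i j * u i = ∑ m, pw m * (b m j * (a m i * u i)) := by
      intro i; rw [hCdec i j, Finset.sum_mul]
      exact Finset.sum_congr rfl fun m _ => by ring
    rw [Finset.sum_congr rfl fun i _ => h1 i, Finset.sum_comm]
    have h2 : ∀ m, ∑ i, pw m * (b m j * (a m i * u i)) = pw m * b m j * (1 / Real.sqrt dA) := by
      intro m
      rw [← Finset.mul_sum]
      have : ∑ i, b m j * (a m i * u i) = b m j * ∑ i, a m i * u i := by
        rw [Finset.mul_sum]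
      rw [this, hau m]
      ring
    rw [Finset.sum_congr rfl fun m _ => h2 m, ← Finset.sum_mul, hfb j]
    rw [hα, hw]
    show (B j).trace.re / (dB : ℝ) * (1 / Real.sqrt dA)
        = 1 / (Real.sqrt dA * Real.sqrt dB) * ((B j).trace.re / Real.sqrt dB)
    rw [div_mul_div_comm, div_mul_div_comm, div_eq_div_iff (by positivity) (by positivity)]
    linear_combination ((B j).trace.re * Real.sqrt dA) * hsqB2
  -- SVD manipulations
  have hUU : U * Uᵀ = 1 := mul_eq_one_comm.mp hU
  have hVV : V * Vᵀ = 1 := mul_eq_one_comm.mp hV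
  set x : Fin (dA ^ 2) → ℝ := Uᵀ.mulVec u with hx
  set y : Fin (dB ^ 2) → ℝ := Vᵀ.mulVec w with hy
  have hCmw : C.mulVec w = α • u := by
    funext i
    show ∑ j, C i j * w j = (α • u) i
    rw [hCw i]
    simp
  have hCTu : Cᵀ.mulVec u = α • w := by
    funext j
    show ∑ i, Cᵀ j i * u i = (α • w) j
    have : ∀ i, Cᵀ j i = C i j := fun i => rfl
    rw [Finset.sum_congr rfl fun i _ => by rw [this i], hCu j]
    simp
  have hDy : Dm.mulVec y = α • x := by
    have h1 : Uᵀ * C * V = Dm := by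
      rw [hC]
      rw [show Uᵀ * (U * Dm * Vᵀ) * V = (Uᵀ * U) * (Dm * (Vᵀ * V)) by
        simp only [Matrix.mul_assoc], hU, hV, Matrix.one_mul, Matrix.mul_one]
    calc Dm.mulVec y = (Uᵀ * C * V).mulVec (Vᵀ.mulVec w) := by rw [h1, hy]
      _ = ((Uᵀ * C * V) * Vᵀ).mulVec w := by rw [Matrix.mulVec_mulVec]
      _ = (Uᵀ * C).mulVec w := by
          rw [show (Uᵀ * C * V) * Vᵀ = (Uᵀ * C) * (V * Vᵀ) by simp only [Matrix.mul_assoc],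
            hVV, Matrix.mul_one]
      _ = Uᵀ.mulVec (C.mulVec w) := by rw [← Matrix.mulVec_mulVec]
      _ = α • x := by rw [hCmw, Matrix.mulVec_smul, hx]
  have hDTx : Dmᵀ.mulVec x = α • y := by
    have hCT : Cᵀ = V * Dmᵀ * Uᵀ := by
      rw [hC, Matrix.transpose_mul, Matrix.transpose_mul, Matrix.transpose_transpose,
        Matrix.mul_assoc]
    have h1 : Vᵀ * Cᵀ * U = Dmᵀ := by
      rw [hCT]
      rw [show Vᵀ * (V * Dmᵀ * Uᵀ) * U = (Vᵀ * V) * (Dmᵀ * (Uᵀ * U)) by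
        simp only [Matrix.mul_assoc], hV, hU, Matrix.one_mul, Matrix.mul_one]
    calc Dmᵀ.mulVec x = (Vᵀ * Cᵀ * U).mulVec (Uᵀ.mulVec u) := by rw [h1, hx]
      _ = ((Vᵀ * Cᵀ * U) * Uᵀ).mulVec u := by rw [Matrix.mulVec_mulVec]
      _ = (Vᵀ * Cᵀ).mulVec u := by
          rw [show (Vᵀ * Cᵀ * U) * Uᵀ = (Vᵀ * Cᵀ) * (U * Uᵀ) by simp only [Matrix.mul_assoc],
            hUU, Matrix.mul_one]
      _ = Vᵀ.mulVec (Cᵀ.mulVec u) := by rw [← Matrix.mulVec_mulVec]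
      _ = α • y := by rw [hCTu, Matrix.mulVec_smul, hy]
  -- coordinates of the diagonal action
  have hDmv : ∀ (v : Fin (dB ^ 2) → ℝ) (i : Fin (dA ^ 2)),
      Dm.mulVec v i = if h : (i : ℕ) < (min dA dB ^ 2)
        then σ ⟨(i : ℕ), h⟩ * v ⟨(i : ℕ), lt_of_lt_of_le h hddB⟩ else 0 := by
    intro v i
    by_cases h : (i : ℕ) < (min dA dB ^ 2)
    · rw [dif_pos h]
      show ∑ j, Dm i j * v j = _
      rw [Finset.sum_eq_single (⟨(i : ℕ), lt_of_lt_of_le h hddB⟩ : Fin (dB ^ 2))]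
      · have hDij : Dm i (⟨(i : ℕ), lt_of_lt_of_le h hddB⟩ : Fin (dB ^ 2)) = σ ⟨(i : ℕ), h⟩ := by
          simp [hDm, svdDiag, h]
        rw [hDij]
      · intro j _ hne
        have hcond : ¬ ((i : ℕ) = (j : ℕ) ∧ (i : ℕ) < (min dA dB ^ 2)) := by
          rintro ⟨hij, -⟩
          exact hne (Fin.ext hij.symm)
        have : Dm i j = 0 := by simp [hDm, svdDiag, hcond]
        rw [this, zero_mul]
      · intro hmem; exact absurd (Finset.mem_univ _) hmem
    · rw [dif_neg h]
      show ∑ j, Dm i j * v j = 0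
      refine Finset.sum_eq_zero fun j _ => ?_
      have hcond : ¬ ((i : ℕ) = (j : ℕ) ∧ (i : ℕ) < (min dA dB ^ 2)) := fun hcon => h hcon.2
      have : Dm i j = 0 := by simp [hDm, svdDiag, hcond]
      rw [this, zero_mul]
  have hDTmv : ∀ (v : Fin (dA ^ 2) → ℝ) (j : Fin (dB ^ 2)),
      Dmᵀ.mulVec v j = if h : (j : ℕ) < (min dA dB ^ 2)
        then σ ⟨(j : ℕ), h⟩ * v ⟨(j : ℕ), lt_of_lt_of_le h hddA⟩ else 0 := by
    intro v j
    by_cases h : (j : ℕ) < (min dA dB ^ 2)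
    · rw [dif_pos h]
      show ∑ i, Dmᵀ j i * v i = _
      rw [Finset.sum_eq_single (⟨(j : ℕ), lt_of_lt_of_le h hddA⟩ : Fin (dA ^ 2))]
      · have hDij : Dmᵀ j (⟨(j : ℕ), lt_of_lt_of_le h hddA⟩ : Fin (dA ^ 2)) = σ ⟨(j : ℕ), h⟩ := by
          show Dm _ j = _
          simp [hDm, svdDiag, h]
        rw [hDij]
      · intro i _ hne
        have hcond : ¬ (((⟨(j : ℕ), lt_of_lt_of_le h hddA⟩ : Fin (dA ^ 2)) : ℕ) = (j : ℕ)) ∨ True := Or.inr trivial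
        have : Dmᵀ j i = 0 := by
          show Dm i j = 0
          have hcond2 : ¬ ((i : ℕ) = (j : ℕ) ∧ (i : ℕ) < (min dA dB ^ 2)) := by
            rintro ⟨hij, -⟩
            exact hne (Fin.ext hij)
          simp [hDm, svdDiag, hcond2]
        rw [this, zero_mul]
      · intro hmem; exact absurd (Finset.mem_univ _) hmem
    · rw [dif_neg h]
      show ∑ i, Dmᵀ j i * v i = 0
      refine Finset.sum_eq_zero fun i _ => ?_
      have : Dmᵀ j i = 0 := by
        show Dm i j = 0
        have hcond2 : ¬ ((i : ℕ) = (j : ℕ) ∧ (i : ℕ) < (min dA dB ^ 2)) := by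
          rintro ⟨hij, hlt⟩
          exact h (hij ▸ hlt)
        simp [hDm, svdDiag, hcond2]
      rw [this, zero_mul]
  have hxnorm : ∑ i, x i ^ 2 = 1 := by
    have h := SVP.mulVec_dot Uᵀ (by rw [Matrix.transpose_transpose]; exact hUU) u u
    calc ∑ i, x i ^ 2 = ∑ i, (Uᵀ.mulVec u) i * (Uᵀ.mulVec u) i := by
          refine Finset.sum_congr rfl fun i _ => ?_
          rw [hx, sq]
      _ = ∑ t, u t * u t := h
      _ = 1 := by rw [← hu2]; exact Finset.sum_congr rfl fun t _ => (sq (u t)).symm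
  have Ey : ∀ i : Fin (dA ^ 2),
      (if h : (i : ℕ) < (min dA dB ^ 2) then σ ⟨(i : ℕ), h⟩ * y ⟨(i : ℕ), lt_of_lt_of_le h hddB⟩ else 0)
        = α * x i := by
    intro i
    have h2 := congrFun hDy i
    rw [hDmv y i] at h2
    simpa using h2
  have Ex : ∀ j : Fin (dB ^ 2),
      (if h : (j : ℕ) < (min dA dB ^ 2) then σ ⟨(j : ℕ), h⟩ * x ⟨(j : ℕ), lt_of_lt_of_le h hddA⟩ else 0)
        = α * y j := by
    intro j
    have h2 := congrFun hDTx j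
    rw [hDTmv x j] at h2
    simpa using h2
  have hx0 : ∀ i : Fin (dA ^ 2), ¬ ((i : ℕ) < (min dA dB ^ 2)) → x i = 0 := by
    intro i h
    have h2 := Ey i
    rw [dif_neg h] at h2
    exact (mul_eq_zero.mp h2.symm).resolve_left hαpos.ne'
  have hy0 : ∀ j : Fin (dB ^ 2), ¬ ((j : ℕ) < (min dA dB ^ 2)) → y j = 0 := by
    intro j h
    have h2 := Ex j
    rw [dif_neg h] at h2
    exact (mul_eq_zero.mp h2.symm).resolve_left hαpos.ne'
  have hC1 : ∀ k : Fin (min dA dB ^ 2), σ k * y (Fin.castLE hddB k) = α * x (Fin.castLE hddA k) := by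
    intro k
    have h2 := Ey (Fin.castLE hddA k)
    rw [dif_pos (show ((Fin.castLE hddA k : Fin (dA ^ 2)) : ℕ) < (min dA dB ^ 2) from k.isLt)] at h2
    exact h2
  have hC3 : ∀ k : Fin (min dA dB ^ 2), σ k * x (Fin.castLE hddA k) = α * y (Fin.castLE hddB k) := by
    intro k
    have h2 := Ex (Fin.castLE hddB k)
    rw [dif_pos (show ((Fin.castLE hddB k : Fin (dB ^ 2)) : ℕ) < (min dA dB ^ 2) from k.isLt)] at h2
    exact h2
  -- find a coordinate where x is nonzero
  have hxex : ∃ i, x i ≠ 0 := by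
    by_contra hall
    push_neg at hall
    rw [Finset.sum_eq_zero (fun i _ => by rw [hall i]; ring)] at hxnorm
    norm_num at hxnorm
  obtain ⟨i0, hi0⟩ := hxex
  have hi0lt : (i0 : ℕ) < (min dA dB ^ 2) := by
    by_contra h
    exact hi0 (hx0 i0 h)
  set k0 : Fin (min dA dB ^ 2) := ⟨(i0 : ℕ), hi0lt⟩ with hk0def
  have hxk0 : x (Fin.castLE hddA k0) ≠ 0 := hi0
  have hSupX : ∀ k : Fin (min dA dB ^ 2), x (Fin.castLE hddA k) ≠ 0 → σ k = α := by
    intro k hxk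
    have h1 := hC1 k
    have h2 := hC3 k
    have h5 : (σ k * σ k - α * α) * x (Fin.castLE hddA k) = 0 := by
      linear_combination σ k * h2 + α * h1
    have h6 : σ k * σ k - α * α = 0 := by
      rcases mul_eq_zero.mp h5 with h | h
      · exact h
      · exact absurd h hxk
    have h7 : (σ k - α) * (σ k + α) = 0 := by linear_combination h6
    rcases mul_eq_zero.mp h7 with h | h
    · linarith
    · have := hσ0 k; linarith
  have hσk0 : σ k0 = α := hSupX k0 hxk0
  have hYX : ∀ k : Fin (min dA dB ^ 2), y (Fin.castLE hddB k) = x (Fin.castLE hddA k) := by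
    intro k
    by_cases hxk : x (Fin.castLE hddA k) = 0
    · have h2 := hC3 k
      rw [hxk, mul_zero] at h2
      have h3 : y (Fin.castLE hddB k) = 0 :=
        (mul_eq_zero.mp h2.symm).resolve_left hαpos.ne'
      rw [h3, hxk]
    · have h2 := hC3 k
      rw [hSupX k hxk] at h2
      exact (mul_left_cancel₀ hαpos.ne' h2).symm
  -- perturbation vectors
  set hvx : Fin (dA ^ 2) → ℝ :=
    fun i => x i - (if i = Fin.castLE hddA k0 then 1 else 0) with hhvx
  set hvy : Fin (dB ^ 2) → ℝ :=
    fun j => y j - (if j = Fin.castLE hddB k0 then 1 else 0) with hhvy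
  have hvxdef : ∀ i, hvx i = x i - (if i = Fin.castLE hddA k0 then 1 else 0) := fun i => rfl
  have hvydef : ∀ j, hvy j = y j - (if j = Fin.castLE hddB k0 then 1 else 0) := fun j => rfl
  have hvx0 : ∀ i : Fin (dA ^ 2), ¬ ((i : ℕ) < min dA dB ^ 2) → hvx i = 0 := by
    intro i h
    have h1 : x i = 0 := hx0 i h
    have h2 : i ≠ Fin.castLE hddA k0 := by
      intro he
      rw [he] at h
      exact h k0.isLt
    rw [hvxdef, h1, if_neg h2, sub_zero]
  have hvy0 : ∀ j : Fin (dB ^ 2), ¬ ((j : ℕ) < min dA dB ^ 2) → hvy j = 0 := by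
    intro j h
    have h1 : y j = 0 := hy0 j h
    have h2 : j ≠ Fin.castLE hddB k0 := by
      intro he
      rw [he] at h
      exact h k0.isLt
    rw [hvydef, h1, if_neg h2, sub_zero]
  have hvxy : ∀ k : Fin (min dA dB ^ 2),
      hvy (Fin.castLE hddB k) = hvx (Fin.castLE hddA k) := by
    intro k
    rw [hvxdef, hvydef, hYX k]
    by_cases hk : k = k0
    · rw [if_pos (by rw [hk]), if_pos (by rw [hk])]
    · rw [if_neg (fun hcon => hk (Fin.castLE_injective _ hcon)),
        if_neg (fun hcon => hk (Fin.castLE_injective _ hcon))]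
  set nsq : ℝ := ∑ i, hvx i ^ 2 with hnsq
  have hnsqy : ∑ j, hvy j ^ 2 = nsq := by
    rw [SVP.sum_castLE hddB (fun j => hvy j ^ 2) (fun j hj => show hvy j ^ 2 = 0 by rw [hvy0 j hj]; ring), hnsq,
      SVP.sum_castLE hddA (fun i => hvx i ^ 2) (fun i hi => show hvx i ^ 2 = 0 by rw [hvx0 i hi]; ring)]
    exact Finset.sum_congr rfl fun k _ => by rw [hvxy k]
  have hSupHXσ : ∀ k : Fin (min dA dB ^ 2), hvx (Fin.castLE hddA k) ≠ 0 → σ k = α := by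
    intro k h
    by_cases hk : k = k0
    · rw [hk]; exact hσk0
    · apply hSupX k
      intro hxk
      apply h
      rw [hvxdef, hxk, if_neg (fun hcon => hk (Fin.castLE_injective _ hcon)), sub_zero]
  have hnsq2 : nsq = 2 - 2 * x (Fin.castLE hddA k0) := by
    have h0 : ∀ i, hvx i ^ 2 = x i ^ 2
        - 2 * ((if i = Fin.castLE hddA k0 then (1 : ℝ) else 0) * x i)
        + (if i = Fin.castLE hddA k0 then (1 : ℝ) else 0) := by
      intro i
      rw [hvxdef]
      by_cases h : i = Fin.castLE hddA k0 <;> simp [h] <;> ring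
    rw [hnsq, Finset.sum_congr rfl fun i _ => h0 i, Finset.sum_add_distrib,
      Finset.sum_sub_distrib, ← Finset.mul_sum]
    have e1 : ∑ i, (if i = Fin.castLE hddA k0 then (1 : ℝ) else 0) * x i
        = x (Fin.castLE hddA k0) := by
      simp [ite_mul, Finset.sum_ite_eq']
    have e2 : ∑ i : Fin (dA ^ 2), (if i = Fin.castLE hddA k0 then (1 : ℝ) else 0) = 1 := by
      simp [Finset.sum_ite_eq']
    rw [e1, e2, hxnorm]
    ring
  set c : ℝ := if nsq = 0 then 0 else 2 / nsq with hcdef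
  have hc : 2 * c = c ^ 2 * nsq := by
    by_cases h : nsq = 0
    · rw [hcdef, if_pos h]; ring
    · rw [hcdef, if_neg h]; field_simp
  have hvxzero : nsq = 0 → ∀ i, hvx i = 0 := by
    intro h i
    have h2 : ∀ i ∈ Finset.univ, (0 : ℝ) ≤ hvx i ^ 2 := fun i _ => sq_nonneg _
    have h3 := (Finset.sum_eq_zero_iff_of_nonneg h2).mp (by rw [← hnsq]; exact h) i
      (Finset.mem_univ i)
    exact pow_eq_zero_iff (two_ne_zero) |>.mp h3
  have hvyzero : nsq = 0 → ∀ j, hvy j = 0 := by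
    intro h j
    have h2 : ∀ j ∈ Finset.univ, (0 : ℝ) ≤ hvy j ^ 2 := fun j _ => sq_nonneg _
    have h3 := (Finset.sum_eq_zero_iff_of_nonneg h2).mp (by rw [hnsqy]; exact h) j
      (Finset.mem_univ j)
    exact pow_eq_zero_iff (two_ne_zero) |>.mp h3
  have hfac0 : nsq ≠ 0 → 1 + c * (x (Fin.castLE hddA k0) - 1) = 0 := by
    intro h
    rw [hcdef, if_neg h]
    have h2 : nsq = 2 - 2 * x (Fin.castLE hddA k0) := hnsq2
    field_simp
    linarith [h2]
  have hP2 : ∀ t, hvx t * (1 + c * (x (Fin.castLE hddA k0) - 1)) = 0 := by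
    intro t
    by_cases h : nsq = 0
    · rw [hvxzero h t, zero_mul]
    · rw [hfac0 h, mul_zero]
  have hP2Y : ∀ t, hvy t * (1 + c * (x (Fin.castLE hddA k0) - 1)) = 0 := by
    intro t
    by_cases h : nsq = 0
    · rw [hvyzero h t, zero_mul]
    · rw [hfac0 h, mul_zero]
  -- rotated singular vector columns
  set Rc : Fin (min dA dB ^ 2) → Fin (dA ^ 2) → ℝ :=
    fun k t => (if t = Fin.castLE hddA k then 1 else 0)
      - c * hvx (Fin.castLE hddA k) * hvx t with hRcdef
  set Sc : Fin (min dA dB ^ 2) → Fin (dB ^ 2) → ℝ :=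
    fun k t => (if t = Fin.castLE hddB k then 1 else 0)
      - c * hvy (Fin.castLE hddB k) * hvy t with hScdef
  have hgON : ∀ k l : Fin (min dA dB ^ 2),
      ∑ i, (U.mulVec (Rc k)) i * (U.mulVec (Rc l)) i = if k = l then 1 else 0 := by
    intro k l
    rw [SVP.mulVec_dot U hU (Rc k) (Rc l)]
    have h2 := SVP.rcol_ortho hvx c (by rw [← hnsq]; exact hc)
      (Fin.castLE hddA k) (Fin.castLE hddA l)
    have h3 : ∑ t, Rc k t * Rc l t
        = if Fin.castLE hddA k = Fin.castLE hddA l then (1 : ℝ) else 0 := h2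
    rw [h3]
    by_cases hkl : k = l
    · rw [if_pos (by rw [hkl]), if_pos hkl]
    · rw [if_neg (fun hcon => hkl (Fin.castLE_injective _ hcon)), if_neg hkl]
  have hfON : ∀ k l : Fin (min dA dB ^ 2),
      ∑ j, (V.mulVec (Sc k)) j * (V.mulVec (Sc l)) j = if k = l then 1 else 0 := by
    intro k l
    rw [SVP.mulVec_dot V hV (Sc k) (Sc l)]
    have h2 := SVP.rcol_ortho hvy c (by rw [hnsqy]; exact hc)
      (Fin.castLE hddB k) (Fin.castLE hddB l)
    have h3 : ∑ t, Sc k t * Sc l t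
        = if Fin.castLE hddB k = Fin.castLE hddB l then (1 : ℝ) else 0 := h2
    rw [h3]
    by_cases hkl : k = l
    · rw [if_pos (by rw [hkl]), if_pos hkl]
    · rw [if_neg (fun hcon => hkl (Fin.castLE_injective _ hcon)), if_neg hkl]
  have hgk0 : U.mulVec (Rc k0) = u := by
    have hRck0 : Rc k0 = x := by
      funext t
      have h := hP2 t
      have hk0v : hvx (Fin.castLE hddA k0) = x (Fin.castLE hddA k0) - 1 := by
        rw [hvxdef, if_pos rfl]
      show (if t = Fin.castLE hddA k0 then (1 : ℝ) else 0)
          - c * hvx (Fin.castLE hddA k0) * hvx t = x t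
      rw [hvxdef t] at h
      rw [hk0v, hvxdef t]
      linear_combination (-1 : ℝ) * h
    rw [hRck0, hx, Matrix.mulVec_mulVec, hUU, Matrix.one_mulVec]
  have hfk0 : V.mulVec (Sc k0) = w := by
    have hSck0 : Sc k0 = y := by
      funext t
      have h := hP2Y t
      have hk0v : hvy (Fin.castLE hddB k0) = x (Fin.castLE hddA k0) - 1 := by
        rw [hvxy k0, hvxdef, if_pos rfl]
      show (if t = Fin.castLE hddB k0 then (1 : ℝ) else 0)
          - c * hvy (Fin.castLE hddB k0) * hvy t = y t
      rw [hk0v]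
      rw [hvydef t] at h ⊢
      linear_combination (-1 : ℝ) * h
    rw [hSck0, hy, Matrix.mulVec_mulVec, hVV, Matrix.one_mulVec]
  have hDR : ∀ (k : Fin (min dA dB ^ 2)) (t : Fin (dA ^ 2)),
      (Dm.mulVec (Sc k)) t
        = σ k * (if t = Fin.castLE hddA k then 1 else 0)
          - c * hvx (Fin.castLE hddA k) * (α * hvx t) := by
    intro k t
    rw [hDmv (Sc k) t]
    by_cases h : (t : ℕ) < min dA dB ^ 2
    · rw [dif_pos h]
      have hIx : Fin.castLE hddA (⟨(t : ℕ), h⟩ : Fin (min dA dB ^ 2)) = t := rfl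
      have hScval : Sc k (Fin.castLE hddB (⟨(t : ℕ), h⟩ : Fin (min dA dB ^ 2)))
          = (if (Fin.castLE hddB (⟨(t : ℕ), h⟩ : Fin (min dA dB ^ 2))) = Fin.castLE hddB k
              then (1 : ℝ) else 0)
            - c * hvx (Fin.castLE hddA k) * hvx t := by
      -- unfold Sc and use hvxy
        show (if (Fin.castLE hddB (⟨(t : ℕ), h⟩ : Fin (min dA dB ^ 2))) = Fin.castLE hddB k
            then (1 : ℝ) else 0)
            - c * hvy (Fin.castLE hddB k)
              * hvy (Fin.castLE hddB (⟨(t : ℕ), h⟩ : Fin (min dA dB ^ 2))) = _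
        rw [hvxy k, hvxy ⟨(t : ℕ), h⟩, hIx]
      have e0 : σ (⟨(t : ℕ), h⟩ : Fin (min dA dB ^ 2)) * hvx t = α * hvx t := by
        by_cases hz : hvx t = 0
        · rw [hz, mul_zero, mul_zero]
        · rw [hSupHXσ ⟨(t : ℕ), h⟩ (by rw [hIx]; exact hz)]
      have e2 : σ (⟨(t : ℕ), h⟩ : Fin (min dA dB ^ 2))
            * (if (Fin.castLE hddB (⟨(t : ℕ), h⟩ : Fin (min dA dB ^ 2))) = Fin.castLE hddB k
                then (1 : ℝ) else 0)
          = σ k * (if t = Fin.castLE hddA k then 1 else 0) := by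
        by_cases hc2 : (⟨(t : ℕ), h⟩ : Fin (min dA dB ^ 2)) = k
        · have ht : t = Fin.castLE hddA k := by rw [← hc2]; rfl
          rw [hc2, if_pos rfl, if_pos ht]
        · have hne2 : t ≠ Fin.castLE hddA k := by
            intro hcon
            apply hc2
            apply Fin.castLE_injective hddA
            rw [hIx]
            exact hcon
          rw [if_neg (fun hcon => hc2 (Fin.castLE_injective _ hcon)), if_neg hne2,
            mul_zero, mul_zero]
      have hidx : (⟨(t : ℕ), lt_of_lt_of_le h hddB⟩ : Fin (dB ^ 2))
          = Fin.castLE hddB (⟨(t : ℕ), h⟩ : Fin (min dA dB ^ 2)) := rfl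
      rw [hidx, hScval, mul_sub, e2]
      linear_combination (-(c * hvx (Fin.castLE hddA k))) * e0
    · rw [dif_neg h]
      rw [if_neg (fun hcon : t = Fin.castLE hddA k => h (by rw [hcon]; exact k.isLt)),
        hvx0 t h]
      ring
  have hgdiag : ∀ k : Fin (min dA dB ^ 2),
      ∑ i, (U.mulVec (Rc k)) i * (∑ j, C i j * (V.mulVec (Sc k)) j) = σ k := by
    intro k
    have hCV : C * V = U * Dm := by
      rw [hC, Matrix.mul_assoc, hV, Matrix.mul_one]
    have hcol : (fun i => ∑ j, C i j * (V.mulVec (Sc k)) j) = U.mulVec (Dm.mulVec (Sc k)) := by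
      funext i
      show (C.mulVec (V.mulVec (Sc k))) i = _
      rw [Matrix.mulVec_mulVec, hCV, ← Matrix.mulVec_mulVec]
    have hsum2 : ∑ i, (U.mulVec (Rc k)) i * (∑ j, C i j * (V.mulVec (Sc k)) j)
        = ∑ i, (U.mulVec (Rc k)) i * (U.mulVec (Dm.mulVec (Sc k))) i := by
      refine Finset.sum_congr rfl fun i _ => ?_
      rw [show (∑ j, C i j * (V.mulVec (Sc k)) j) = (U.mulVec (Dm.mulVec (Sc k))) i from
        congrFun hcol i]
    rw [hsum2, SVP.mulVec_dot U hU (Rc k) (Dm.mulVec (Sc k))]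
    have hterm : ∀ t, Rc k t * (Dm.mulVec (Sc k)) t
        = ((if t = Fin.castLE hddA k then 1 else 0)
              - c * hvx (Fin.castLE hddA k) * hvx t)
          * (σ k * (if t = Fin.castLE hddA k then 1 else 0)
              - c * hvx (Fin.castLE hddA k) * (α * hvx t)) := by
      intro t
      rw [hDR k t]
    rw [Finset.sum_congr rfl fun t _ => hterm t]
    exact SVP.rcol_diag hvx c (hvx (Fin.castLE hddA k)) (σ k) α (Fin.castLE hddA k)
      (by rw [← hnsq]; exact hc) rfl (hSupHXσ k)
  -- the key trace-sum bound
  set s : Finset (Fin (min dA dB ^ 2)) := Finset.univ.erase k0 with hsdef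
  have htilA : ∀ m : Fin ns,
      ∑ i, (a m i - (1 / Real.sqrt dA) * u i) ^ 2 ≤ ((dA : ℝ) - 1) / dA := by
    intro m
    have hexp : ∀ i, (a m i - (1 / Real.sqrt dA) * u i) ^ 2
        = a m i ^ 2 - 2 * (1 / Real.sqrt dA) * (a m i * u i)
          + (1 / Real.sqrt dA) ^ 2 * u i ^ 2 := by
      intro i; ring
    rw [Finset.sum_congr rfl fun i _ => hexp i, Finset.sum_add_distrib, Finset.sum_sub_distrib,
      ← Finset.mul_sum, ← Finset.mul_sum, hau m, hu2, mul_one]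
    have h1 : (1 / Real.sqrt dA) ^ 2 = 1 / dA := by
      rw [div_pow, one_pow, Real.sq_sqrt (by positivity)]
    have h2 : 2 * (1 / Real.sqrt dA) * (1 / Real.sqrt dA) = 2 * (1 / dA) := by
      rw [mul_assoc, div_mul_div_comm, one_mul, hsqA2]
    rw [h1, h2]
    have h4 : ((dA : ℝ) - 1) / dA = 1 - 1 / dA := by field_simp
    rw [h4]
    linarith [haa m]
  have htilB : ∀ m : Fin ns,
      ∑ j, (b m j - (1 / Real.sqrt dB) * w j) ^ 2 ≤ ((dB : ℝ) - 1) / dB := by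
    intro m
    have hexp : ∀ j, (b m j - (1 / Real.sqrt dB) * w j) ^ 2
        = b m j ^ 2 - 2 * (1 / Real.sqrt dB) * (b m j * w j)
          + (1 / Real.sqrt dB) ^ 2 * w j ^ 2 := by
      intro j; ring
    rw [Finset.sum_congr rfl fun j _ => hexp j, Finset.sum_add_distrib, Finset.sum_sub_distrib,
      ← Finset.mul_sum, ← Finset.mul_sum, hbw m, hw2, mul_one]
    have h1 : (1 / Real.sqrt dB) ^ 2 = 1 / dB := by
      rw [div_pow, one_pow, Real.sq_sqrt (by positivity)]
    have h2 : 2 * (1 / Real.sqrt dB) * (1 / Real.sqrt dB) = 2 * (1 / dB) := by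
      rw [mul_assoc, div_mul_div_comm, one_mul, hsqB2]
    rw [h1, h2]
    have h4 : ((dB : ℝ) - 1) / dB = 1 - 1 / dB := by field_simp
    rw [h4]
    linarith [hbb m]
  have horthA : ∀ m : Fin ns, ∀ k ∈ s,
      ∑ i, (U.mulVec (Rc k)) i * a m i
        = ∑ i, (U.mulVec (Rc k)) i * (a m i - (1 / Real.sqrt dA) * u i) := by
    intro m k hk
    have hk0ne : k ≠ k0 := (Finset.mem_erase.mp hk).1
    have hgu : ∑ i, (U.mulVec (Rc k)) i * u i = 0 := by
      have h1 := hgON k k0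
      rw [if_neg hk0ne] at h1
      rw [← hgk0]
      exact h1
    symm
    have hexp : ∀ i, (U.mulVec (Rc k)) i * (a m i - (1 / Real.sqrt dA) * u i)
        = (U.mulVec (Rc k)) i * a m i
          - (1 / Real.sqrt dA) * ((U.mulVec (Rc k)) i * u i) := by intro i; ring
    rw [Finset.sum_congr rfl fun i _ => hexp i, Finset.sum_sub_distrib, ← Finset.mul_sum,
      hgu, mul_zero, sub_zero]
  have horthB : ∀ m : Fin ns, ∀ k ∈ s,
      ∑ j, (V.mulVec (Sc k)) j * b m j
        = ∑ j, (V.mulVec (Sc k)) j * (b m j - (1 / Real.sqrt dB) * w j) := by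
    intro m k hk
    have hk0ne : k ≠ k0 := (Finset.mem_erase.mp hk).1
    have hfw : ∑ j, (V.mulVec (Sc k)) j * w j = 0 := by
      have h1 := hfON k k0
      rw [if_neg hk0ne] at h1
      rw [← hfk0]
      exact h1
    symm
    have hexp : ∀ j, (V.mulVec (Sc k)) j * (b m j - (1 / Real.sqrt dB) * w j)
        = (V.mulVec (Sc k)) j * b m j
          - (1 / Real.sqrt dB) * ((V.mulVec (Sc k)) j * w j) := by intro j; ring
    rw [Finset.sum_congr rfl fun j _ => hexp j, Finset.sum_sub_distrib, ← Finset.mul_sum,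
      hfw, mul_zero, sub_zero]
  have hperm : ∀ m : Fin ns,
      ∑ k ∈ s, ((∑ i, (U.mulVec (Rc k)) i * a m i) * (∑ j, (V.mulVec (Sc k)) j * b m j))
        ≤ Real.sqrt (((dA : ℝ) - 1) / dA) * Real.sqrt (((dB : ℝ) - 1) / dB) := by
    intro m
    rw [Finset.sum_congr rfl fun k hk => by rw [horthA m k hk, horthB m k hk]]
    have hcs := SVP.sum_mul_le_sqrt_mul_sqrt s
      (fun k => ∑ i, (U.mulVec (Rc k)) i * (a m i - (1 / Real.sqrt dA) * u i))
      (fun k => ∑ j, (V.mulVec (Sc k)) j * (b m j - (1 / Real.sqrt dB) * w j))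
    refine hcs.trans ?_
    have hb1 := SVP.bessel (fun k => U.mulVec (Rc k)) s (fun k _ l _ => hgON k l)
      (fun i => a m i - (1 / Real.sqrt dA) * u i)
    have hb2 := SVP.bessel (fun k => V.mulVec (Sc k)) s (fun k _ l _ => hfON k l)
      (fun j => b m j - (1 / Real.sqrt dB) * w j)
    exact mul_le_mul (Real.sqrt_le_sqrt (hb1.trans (htilA m)))
      (Real.sqrt_le_sqrt (hb2.trans (htilB m))) (Real.sqrt_nonneg _) (Real.sqrt_nonneg _)
  have hT : ∀ k : Fin (min dA dB ^ 2),
      σ k = ∑ m, pw m * ((∑ i, (U.mulVec (Rc k)) i * a m i)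
        * (∑ j, (V.mulVec (Sc k)) j * b m j)) := by
    intro k
    rw [← hgdiag k]
    have h1 : ∀ i, (∑ j, C i j * (V.mulVec (Sc k)) j)
        = ∑ m, pw m * a m i * (∑ j, (V.mulVec (Sc k)) j * b m j) := by
      intro i
      have h0 : ∀ j, C i j * (V.mulVec (Sc k)) j
          = ∑ m, pw m * a m i * ((V.mulVec (Sc k)) j * b m j) := by
        intro j
        rw [hCdec i j, Finset.sum_mul]
        exact Finset.sum_congr rfl fun m _ => by ring
      rw [Finset.sum_congr rfl fun j _ => h0 j, Finset.sum_comm]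
      exact Finset.sum_congr rfl fun m _ => by rw [← Finset.mul_sum]
    rw [Finset.sum_congr rfl fun i _ => by rw [h1 i]]
    have h2 : ∀ i, (U.mulVec (Rc k)) i
          * (∑ m, pw m * a m i * (∑ j, (V.mulVec (Sc k)) j * b m j))
        = ∑ m, pw m * (((U.mulVec (Rc k)) i * a m i)
            * (∑ j, (V.mulVec (Sc k)) j * b m j)) := by
      intro i
      rw [Finset.mul_sum]
      exact Finset.sum_congr rfl fun m _ => by ring
    rw [Finset.sum_congr rfl fun i _ => h2 i, Finset.sum_comm]
    refine Finset.sum_congr rfl fun m _ => ?_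
    have h3 : ∀ i, pw m * (((U.mulVec (Rc k)) i * a m i)
          * (∑ j, (V.mulVec (Sc k)) j * b m j))
        = (pw m * (∑ j, (V.mulVec (Sc k)) j * b m j)) * ((U.mulVec (Rc k)) i * a m i) := by
      intro i; ring
    rw [Finset.sum_congr rfl fun i _ => h3 i, ← Finset.mul_sum]
    ring
  have hsumσ : ∑ k ∈ s, σ k
      ≤ Real.sqrt (((dA : ℝ) - 1) / dA) * Real.sqrt (((dB : ℝ) - 1) / dB) := by
    rw [Finset.sum_congr rfl fun k _ => hT k, Finset.sum_comm]
    have h1 : ∀ m, ∑ k ∈ s, pw m * ((∑ i, (U.mulVec (Rc k)) i * a m i)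
          * (∑ j, (V.mulVec (Sc k)) j * b m j))
        = pw m * ∑ k ∈ s, ((∑ i, (U.mulVec (Rc k)) i * a m i)
          * (∑ j, (V.mulVec (Sc k)) j * b m j)) := by
      intro m; rw [Finset.mul_sum]
    rw [Finset.sum_congr rfl fun m _ => h1 m]
    calc ∑ m, pw m * ∑ k ∈ s, ((∑ i, (U.mulVec (Rc k)) i * a m i)
          * (∑ j, (V.mulVec (Sc k)) j * b m j))
        ≤ ∑ m, pw m * (Real.sqrt (((dA : ℝ) - 1) / dA) * Real.sqrt (((dB : ℝ) - 1) / dB)) :=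
          Finset.sum_le_sum fun m _ => mul_le_mul_of_nonneg_left (hperm m) (hp0 m)
      _ = Real.sqrt (((dA : ℝ) - 1) / dA) * Real.sqrt (((dB : ℝ) - 1) / dB) := by
          rw [← Finset.sum_mul, hp1, one_mul]
  -- endgame
  have hcard : s.card = min dA dB ^ 2 - 1 := by
    rw [hsdef, Finset.card_erase_of_mem (Finset.mem_univ _), Finset.card_univ, Fintype.card_fin]
  have hprodsplit : ∏ k, σ k = σ k0 * ∏ k ∈ s, σ k := by
    rw [hsdef]
    exact (Finset.mul_prod_erase Finset.univ σ (Finset.mem_univ k0)).symm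
  have hDdR : (max (dA : ℝ) (dB : ℝ)) * (min (dA : ℝ) (dB : ℝ)) = (dA : ℝ) * (dB : ℝ) := by
    rcases le_total (dA : ℝ) (dB : ℝ) with h | h
    · rw [max_eq_right h, min_eq_left h]; ring
    · rw [max_eq_left h, min_eq_right h]
  have hαgoal : α = 1 / Real.sqrt ((max (dA : ℝ) (dB : ℝ)) * (min (dA : ℝ) (dB : ℝ))) := by
    rw [hα, hDdR, Real.sqrt_mul (by positivity)]
  rcases Nat.lt_or_ge (min dA dB) 2 with hdlt | hd2
  · have hm1 : min dA dB = 1 := by omega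
    have hdd1 : min dA dB ^ 2 = 1 := by rw [hm1, one_pow]
    have hexp0 : min dA dB ^ 2 - 1 = 0 := by rw [hdd1]
    have hsempty : s = ∅ := Finset.card_eq_zero.mp (by rw [hcard, hdd1])
    rw [hprodsplit, hsempty, Finset.prod_empty, mul_one, hσk0, hexp0, pow_zero, mul_one,
      hαgoal]
  · have hone_le : 1 ≤ min dA dB ^ 2 := hddpos
    have hfour : 4 ≤ min dA dB ^ 2 := by
      calc 4 = 2 ^ 2 := rfl
        _ ≤ min dA dB ^ 2 := Nat.pow_le_pow_left hd2 2
    have hcast : ((min dA dB ^ 2 - 1 : ℕ) : ℝ) = (min (dA : ℝ) (dB : ℝ)) ^ 2 - 1 := by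
      rw [Nat.cast_sub hone_le, Nat.cast_pow, Nat.cast_one, Nat.cast_min]
    have hq2 : (2 : ℝ) ≤ min (dA : ℝ) (dB : ℝ) := by
      rw [← Nat.cast_min]; exact_mod_cast hd2
    have hq21 : (0 : ℝ) < (min (dA : ℝ) (dB : ℝ)) ^ 2 - 1 := by nlinarith
    have hdA1 : (1 : ℝ) ≤ (dA : ℝ) := by exact_mod_cast hdA
    have hdB1 : (1 : ℝ) ≤ (dB : ℝ) := by exact_mod_cast hdB
    have hdApos' : (0 : ℝ) < (dA : ℝ) := by positivity
    have hdBpos' : (0 : ℝ) < (dB : ℝ) := by positivity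
    set Sv : ℝ := Real.sqrt (((dA : ℝ) - 1) / dA) * Real.sqrt (((dB : ℝ) - 1) / dB) with hSv
    have hSvnn : 0 ≤ Sv := by rw [hSv]; positivity
    have hprodbd : ∏ k ∈ s, σ k
        ≤ (Sv / ((min dA dB ^ 2 - 1 : ℕ) : ℝ)) ^ (min dA dB ^ 2 - 1) :=
      SVP.prod_le_div_pow s σ (min dA dB ^ 2 - 1) (fun k _ => hσ0 k) hcard (by omega) Sv hsumσ
    have hSvsq : Sv ^ 2 = (((dA : ℝ) - 1) * ((dB : ℝ) - 1)) / ((dA : ℝ) * (dB : ℝ)) := by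
      rw [hSv, mul_pow, Real.sq_sqrt (div_nonneg (by linarith) hdApos'.le),
        Real.sq_sqrt (div_nonneg (by linarith) hdBpos'.le), div_mul_div_comm]
    have hβ : Real.sqrt
        (((max (dA : ℝ) (dB : ℝ) - 1) / (max (dA : ℝ) (dB : ℝ) * ((min (dA : ℝ) (dB : ℝ)) ^ 2 - 1))) *
         ((min (dA : ℝ) (dB : ℝ) - 1) / (min (dA : ℝ) (dB : ℝ) * ((min (dA : ℝ) (dB : ℝ)) ^ 2 - 1))))
        = Sv / ((min (dA : ℝ) (dB : ℝ)) ^ 2 - 1) := by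
      have harg : ((max (dA : ℝ) (dB : ℝ) - 1) / (max (dA : ℝ) (dB : ℝ) * ((min (dA : ℝ) (dB : ℝ)) ^ 2 - 1))) *
          ((min (dA : ℝ) (dB : ℝ) - 1) / (min (dA : ℝ) (dB : ℝ) * ((min (dA : ℝ) (dB : ℝ)) ^ 2 - 1)))
          = (Sv / ((min (dA : ℝ) (dB : ℝ)) ^ 2 - 1)) ^ 2 := by
        rw [div_pow, hSvsq, div_mul_div_comm, div_div]
        rcases le_total (dA : ℝ) (dB : ℝ) with h | h
        · have hq21' := hq21
          rw [min_eq_left h] at hq21'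
          rw [max_eq_right h, min_eq_left h]
          have e1 : (0 : ℝ) < ((dB : ℝ) * (((dA : ℝ)) ^ 2 - 1))
              * ((dA : ℝ) * (((dA : ℝ)) ^ 2 - 1)) :=
            mul_pos (mul_pos hdBpos' hq21') (mul_pos hdApos' hq21')
          have e2 : (0 : ℝ) < (dA : ℝ) * (dB : ℝ) * ((((dA : ℝ)) ^ 2 - 1) ^ 2) :=
            mul_pos (by positivity) (pow_pos hq21' 2)
          rw [div_eq_div_iff e1.ne' e2.ne']
          ring
        · have hq21' := hq21
          rw [min_eq_right h] at hq21'
          rw [max_eq_left h, min_eq_right h]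
          have e1 : (0 : ℝ) < ((dA : ℝ) * (((dB : ℝ)) ^ 2 - 1))
              * ((dB : ℝ) * (((dB : ℝ)) ^ 2 - 1)) :=
            mul_pos (mul_pos hdApos' hq21') (mul_pos hdBpos' hq21')
          have e2 : (0 : ℝ) < (dA : ℝ) * (dB : ℝ) * ((((dB : ℝ)) ^ 2 - 1) ^ 2) :=
            mul_pos (by positivity) (pow_pos hq21' 2)
          rw [div_eq_div_iff e1.ne' e2.ne']
          ring
      rw [harg, Real.sqrt_sq (div_nonneg hSvnn hq21.le)]
    calc ∏ k, σ k = σ k0 * ∏ k ∈ s, σ k := hprodsplit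
      _ = α * ∏ k ∈ s, σ k := by rw [hσk0]
      _ ≤ α * (Sv / ((min dA dB ^ 2 - 1 : ℕ) : ℝ)) ^ (min dA dB ^ 2 - 1) :=
          mul_le_mul_of_nonneg_left hprodbd hαpos.le
      _ = _ := by rw [hαgoal, hcast, ← hβ]

end
end
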